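/- arXiv:2411.05721 — 2 statements merged into one kernel-verified Lean document; each statement's English description precedes it below -/
import Mathlib

section
/- Let n and d be positive integers. For every u ∈ ℤ^d_{≥0} there is a direct sum decomposition of ℂ-vector spaces S_u = (I_R)_u ⊕ ψ_u(V_{|u|}), where ψ_u(V_{|u|}) is the image of the linear map ψ_u. -/
/-!
Common setup, following the paper "On the abundance of minimal border rank symmetric
tensors verifying Comon's conjecture".

* `S = ℂ[α_{i,j} : 1 ≤ i ≤ d, 1 ≤ j ≤ n]` is modeled as `MvPolynomial (Fin d × Fin n) ℂ`,
  with the `ℤ^d`-grading in which `deg α_{i,j} = e_i`; `Scomp n d u` is the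
  multidegree-`u` component (`u : Fin d → ℕ`).
* `V = ℂ[β_1,…,β_n]` is modeled as `MvPolynomial (Fin n) ℂ` with its standard grading;
  `Vcomp n N` is the degree-`N` component.
* The graded duals `T` and `P` are modeled by the same polynomial rings, with `S`
  (resp. `V`) acting by differentiation (`apolar`); `ann F` is the apolar
  (annihilator) ideal of `F`.
* A tensor `F ∈ (ℂ^n)^{⊗d}` is an element of the multidegree-`(1,…,1)` component
  `Scomp n d (fun _ => 1)` (a multilinear form in the `x_{i,j}`).
-/

open MvPolynomial Submodule Module

noncomputable section

namespace BorderComon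

/-- the multidegree-`u` graded component of `S`. -/
def Scomp (n d : ℕ) (u : Fin d → ℕ) : Submodule ℂ (MvPolynomial (Fin d × Fin n) ℂ) :=
  weightedHomogeneousSubmodule ℂ (fun p : Fin d × Fin n => Pi.single p.1 1) u

/-- the degree-`N` graded component of `V`. -/
def Vcomp (n : ℕ) (N : ℕ) : Submodule ℂ (MvPolynomial (Fin n) ℂ) :=
  homogeneousSubmodule (Fin n) ℂ N

/-- the diagonal ring map `π : S → V`, `α_{i,j} ↦ β_j`. -/
def piAlg (n d : ℕ) : MvPolynomial (Fin d × Fin n) ℂ →ₐ[ℂ] MvPolynomial (Fin n) ℂ :=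
  aeval (fun p : Fin d × Fin n => X p.2)

/-- `π` as a `ℂ`-linear map. -/
def piL (n d : ℕ) : MvPolynomial (Fin d × Fin n) ℂ →ₗ[ℂ] MvPolynomial (Fin n) ℂ :=
  (piAlg n d).toLinearMap

/-- the ring map `ρ : S → V`, `α_{1,j} ↦ β_j` and `α_{i,j} ↦ 0` for `i ≥ 2`
(rows are `0`-indexed, so the first row is row `0`). -/
def rho (n d : ℕ) : MvPolynomial (Fin d × Fin n) ℂ →ₐ[ℂ] MvPolynomial (Fin n) ℂ :=
  aeval (fun p : Fin d × Fin n => if (p.1 : ℕ) = 0 then X p.2 else 0)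

/-- the result of differentiating `F` by the monomial `X^a`:
`∂^a X^b = (∏_i b_i!/(b_i-a_i)!) X^{b-a}` (and `= 0` unless `a ≤ b`, which is
automatic since the descending factorial vanishes there). -/
def diffMon {σ : Type*} (a : σ →₀ ℕ) (F : MvPolynomial σ ℂ) : MvPolynomial σ ℂ :=
  ∑ b ∈ F.support, (F.coeff b * ∏ i ∈ a.support, ((b i).descFactorial (a i) : ℂ)) •
    monomial (b - a) (1 : ℂ)

/-- the apolarity action: `apolar F ψ = ψ ∘ F` is the result of letting `ψ` act on `F`
by differentiation, linearly in `ψ`. -/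
def apolar {σ : Type*} (F : MvPolynomial σ ℂ) : MvPolynomial σ ℂ →ₗ[ℂ] MvPolynomial σ ℂ :=
  Finsupp.lsum ℂ (fun a : σ →₀ ℕ => LinearMap.toSpanSingleton ℂ _ (diffMon a F)) ∘ₗ
    (AddMonoidAlgebra.coeffLinearEquiv ℂ).toLinearMap

/-- the apolar (annihilator) ideal `Ann(F) = {ψ : ψ ∘ F = 0}`, as a subspace. -/
def ann {σ : Type*} (F : MvPolynomial σ ℂ) : Submodule ℂ (MvPolynomial σ ℂ) :=
  LinearMap.ker (apolar F)

/-- the ideal `I_R ⊆ S` generated by the `2×2` minors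
`α_{i,j} α_{k,ℓ} − α_{i,ℓ} α_{k,j}`, `i < k`, `j < ℓ`. -/
def IR (n d : ℕ) : Ideal (MvPolynomial (Fin d × Fin n) ℂ) :=
  Ideal.span {q | ∃ i k : Fin d, ∃ j l : Fin n, i < k ∧ j < l ∧
    q = X (i, j) * X (k, l) - X (i, l) * X (k, j)}

/-- `J ⊆ S` is a (multigraded) homogeneous ideal: it is the sum of its
multigraded components. -/
def IsHomogS (n d : ℕ) (J : Ideal (MvPolynomial (Fin d × Fin n) ℂ)) : Prop :=
  Submodule.restrictScalars ℂ J = ⨆ u : Fin d → ℕ, (Submodule.restrictScalars ℂ J ⊓ Scomp n d u)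

/-- `I ⊆ V` is a homogeneous ideal: it is the sum of its graded components. -/
def IsHomogV (n : ℕ) (I : Ideal (MvPolynomial (Fin n) ℂ)) : Prop :=
  Submodule.restrictScalars ℂ I = ⨆ N : ℕ, (Submodule.restrictScalars ℂ I ⊓ Vcomp n N)

/-- the exponent redistribution underlying `ψ_u`: in the sorted list
`i_1 ≤ ⋯ ≤ i_N` of the indices of the monomial `β^γ` (value `j` occurring `γ j`
times, `N = |γ|`), row `i` receives the block of positions
`[∑_{i'<i} u i', ∑_{i'≤i} u i')`, while value `j` occupies positions
`[∑_{j'<j} γ j', ∑_{j'≤j} γ j')`; hence the exponent of `α_{i,j}` is the size of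
the intersection of these two intervals. -/
def distrib (n d : ℕ) (u : Fin d → ℕ) (γ : Fin n →₀ ℕ) : (Fin d × Fin n) →₀ ℕ :=
  Finsupp.equivFunOnFinite.symm fun p : Fin d × Fin n =>
    min (∑ i ∈ Finset.univ.filter fun i : Fin d => (i : ℕ) ≤ (p.1 : ℕ), u i)
        (∑ j ∈ Finset.univ.filter fun j : Fin n => (j : ℕ) ≤ (p.2 : ℕ), γ j)
    - max (∑ i ∈ Finset.univ.filter fun i : Fin d => (i : ℕ) < (p.1 : ℕ), u i)
          (∑ j ∈ Finset.univ.filter fun j : Fin n => (j : ℕ) < (p.2 : ℕ), γ j)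

/-- the linear map `ψ_u : V → S` sending a monomial `β_{i_1} β_{i_2} ⋯ β_{i_N}`
with `i_1 ≤ i_2 ≤ ⋯ ≤ i_N` to
`(α_{1,i_1} ⋯ α_{1,i_{u_1}}) (α_{2,i_{u_1+1}} ⋯ α_{2,i_{u_1+u_2}}) ⋯`.
(Its restriction to `Vcomp n (∑ i, u i)` is the map `ψ_u : V_{|u|} → S_u` of the
paper.) -/
def psi (n d : ℕ) (u : Fin d → ℕ) :
    MvPolynomial (Fin n) ℂ →ₗ[ℂ] MvPolynomial (Fin d × Fin n) ℂ :=
  AddMonoidAlgebra.mapDomainLinearMap ℂ ℂ (distrib n d u)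

/-- `Υ(I) = I_R + ∑_{u} ψ_u(I_{|u|}) ⊆ S`. -/
def Upsilon (n d : ℕ) (I : Ideal (MvPolynomial (Fin n) ℂ)) :
    Submodule ℂ (MvPolynomial (Fin d × Fin n) ℂ) :=
  Submodule.restrictScalars ℂ (IR n d) ⊔
    ⨆ u : Fin d → ℕ, Submodule.map (psi n d u) (Submodule.restrictScalars ℂ I ⊓ Vcomp n (∑ i, u i))

/-- the irrelevant ideal `B_X = ∏_{i=1}^d (α_{i,1},…,α_{i,n}) ⊆ S`. -/
def BX (n d : ℕ) : Ideal (MvPolynomial (Fin d × Fin n) ℂ) :=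
  ∏ i : Fin d, Ideal.span (Set.range fun j : Fin n => X (i, j))

/-- the irrelevant ideal `B_Y = (β_1,…,β_n) ⊆ V`. -/
def BY (n : ℕ) : Ideal (MvPolynomial (Fin n) ℂ) :=
  Ideal.span (Set.range X)

/-- `Σ(J) = ⊕_{a ≥ 0} ⊕_{s ∈ ℰ} π(J_{a𝟏+s}) ⊆ V`, where
`ℰ = {0, e_1, e_1+e_2, …, e_1+⋯+e_{d-1}}` (the element `s` with `m` ones is
`fun i => if i < m then 1 else 0`). -/
def SigmaMap (n d : ℕ) (J : Ideal (MvPolynomial (Fin d × Fin n) ℂ)) :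
    Submodule ℂ (MvPolynomial (Fin n) ℂ) :=
  ⨆ a : ℕ, ⨆ m : Fin d, Submodule.map (piL n d)
    (Submodule.restrictScalars ℂ J ⊓ Scomp n d (fun i => a + if (i : ℕ) < (m : ℕ) then 1 else 0))

/-- the set of tensors of rank at most `r`: sums of `r` decomposable tensors
`v_1 ⊗ ⋯ ⊗ v_d = ∏_i (∑_j v_i(j) x_{i,j})`. -/
def rankLE (n d r : ℕ) : Set (MvPolynomial (Fin d × Fin n) ℂ) :=
  {F | ∃ v : Fin r → Fin d → Fin n → ℂ,
    F = ∑ s : Fin r, ∏ i : Fin d, ∑ j : Fin n, C (v s i j) * X (i, j)}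

/-- `F` has border rank at most `r`: coefficientwise (finitely many coefficients are
involved), `F` lies in the closure of the set of tensors of rank at most `r`. -/
def brkLE (n d : ℕ) (F : MvPolynomial (Fin d × Fin n) ℂ) (r : ℕ) : Prop :=
  (fun m => coeff m F) ∈ closure ((fun G => fun m => coeff m G) '' rankLE n d r)

/-- the border rank of a tensor. -/
def brk (n d : ℕ) (F : MvPolynomial (Fin d × Fin n) ℂ) : ℕ :=
  sInf {r | brkLE n d F r}

/-- polynomials that are sums of `r` `d`-th powers of linear forms. -/
def srankLE (n d r : ℕ) : Set (MvPolynomial (Fin n) ℂ) :=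
  {p | ∃ c : Fin r → Fin n → ℂ, p = ∑ s : Fin r, (∑ j : Fin n, C (c s j) * X j) ^ d}

/-- `p` has symmetric border rank at most `r`. -/
def sbrkLE (n d : ℕ) (p : MvPolynomial (Fin n) ℂ) (r : ℕ) : Prop :=
  (fun m => coeff m p) ∈ closure ((fun q => fun m => coeff m q) '' srankLE n d r)

/-- the symmetric border rank of a degree-`d` form. -/
def sbrk (n d : ℕ) (p : MvPolynomial (Fin n) ℂ) : ℕ :=
  sInf {r | sbrkLE n d p r}

/-- `F` is a symmetric tensor: invariant under the permutations of the `d` factors. -/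
def IsSymm (n d : ℕ) (F : MvPolynomial (Fin d × Fin n) ℂ) : Prop :=
  ∀ τ : Equiv.Perm (Fin d), rename (Prod.map τ id) F = F

/-- the degree-`d` polynomial `p_F` corresponding to a symmetric tensor `F`, obtained
by identifying all the rows of variables (`x_{i,j} ↦ y_j`); `F` is the polarization
of `p_F`. -/
def pF (n d : ℕ) (F : MvPolynomial (Fin d × Fin n) ℂ) : MvPolynomial (Fin n) ℂ :=
  rename Prod.snd F

/-- `F` is concise: the contraction `(ℂ^n)^* → (ℂ^n)^{⊗(d-1)}` of the first tensor
factor, `w ↦ F(x_{1,j} := w_j)`, is injective. -/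
def Concise (n d : ℕ) (F : MvPolynomial (Fin d × Fin n) ℂ) : Prop :=
  Function.Injective fun w : Fin n → ℂ =>
    aeval (fun p : Fin d × Fin n => if (p.1 : ℕ) = 0 then C (w p.2) else X p) F

/-- the ideal `∑_{0<u<𝟏} S·Ann(F)_u` generated by the components `Ann(F)_u`,
`0 < u < 𝟏` (componentwise). -/
def midIdeal (n d : ℕ) (F : MvPolynomial (Fin d × Fin n) ℂ) :
    Ideal (MvPolynomial (Fin d × Fin n) ℂ) :=
  Ideal.span (⋃ u ∈ {u : Fin d → ℕ | 0 < u ∧ u < fun _ => 1},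
    ((ann F ⊓ Scomp n d u : Submodule ℂ (MvPolynomial (Fin d × Fin n) ℂ)) :
      Set (MvPolynomial (Fin d × Fin n) ℂ)))

/-- `F` is a *sharp* tensor:
(1) `Ann(F)` has exactly `n-1` minimal generators of multidegree `𝟏`;
(2) `dim (S/Ann F)_u = n` for all `0 < u < 𝟏`;
(3) `dim (S/(Ann(F)_{e_i+e_j}))_{s e_i + e_j} = n` for all `i ≠ j`, `1 ≤ s ≤ d-1`. -/
def Sharp (n d : ℕ) (F : MvPolynomial (Fin d × Fin n) ℂ) : Prop :=
  (finrank ℂ (ann F ⊓ Scomp n d fun _ => 1 :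
        Submodule ℂ (MvPolynomial (Fin d × Fin n) ℂ)) -
      finrank ℂ (Submodule.restrictScalars ℂ (midIdeal n d F) ⊓ Scomp n d fun _ => 1 :
        Submodule ℂ (MvPolynomial (Fin d × Fin n) ℂ)) = n - 1) ∧
  (∀ u : Fin d → ℕ, 0 < u → u < (fun _ => 1) →
    finrank ℂ (Scomp n d u ⧸ Submodule.comap (Scomp n d u).subtype (ann F)) = n) ∧
  (∀ i j : Fin d, i ≠ j → ∀ s : ℕ, 1 ≤ s → s ≤ d - 1 →
    finrank ℂ (Scomp n d (Pi.single i s + Pi.single j 1) ⧸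
      Submodule.comap (Scomp n d (Pi.single i s + Pi.single j 1)).subtype
        (Submodule.restrictScalars ℂ (Ideal.span
          ((ann F ⊓ Scomp n d (Pi.single i 1 + Pi.single j 1) :
            Submodule ℂ (MvPolynomial (Fin d × Fin n) ℂ)) :
            Set (MvPolynomial (Fin d × Fin n) ℂ))))) = n)


/-- partial sums of `f` below `t`. -/
def pc {m : ℕ} (f : Fin m → ℕ) (t : ℕ) : ℕ :=
  ∑ j ∈ Finset.univ.filter fun j : Fin m => (j : ℕ) < t, f j

lemma pc_zero {m : ℕ} (f : Fin m → ℕ) : pc f 0 = 0 := by simp [pc]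

lemma pc_mono {m : ℕ} (f : Fin m → ℕ) : Monotone (pc f) := by
  intro s t hst
  refine Finset.sum_le_sum_of_subset ?_
  intro j hj
  simp only [Finset.mem_filter, Finset.mem_univ, true_and] at *
  omega

lemma pc_total {m : ℕ} (f : Fin m → ℕ) (t : ℕ) (h : m ≤ t) : pc f t = ∑ j, f j := by
  unfold pc
  rw [Finset.filter_true_of_mem fun j _ => j.2.trans_le h]

lemma pc_succ_le {m : ℕ} (f : Fin m → ℕ) (j : Fin m) :
    pc f ((j : ℕ) + 1) = pc f j + f j := by
  unfold pc
  have : (Finset.univ.filter fun j' : Fin m => (j' : ℕ) < (j : ℕ) + 1)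
      = insert j (Finset.univ.filter fun j' : Fin m => (j' : ℕ) < (j : ℕ)) := by
    ext j'
    simp only [Finset.mem_filter, Finset.mem_insert, Finset.mem_univ, true_and, Fin.ext_iff]
    omega
  rw [this, Finset.sum_insert (by simp)]
  ring

lemma sum_card_slices (g : ℕ → ℕ) (hg : Monotone g) :
    ∀ (m : ℕ) (s : Finset ℕ), (∀ x ∈ s, g 0 ≤ x) → (∀ x ∈ s, x < g m) →
      ∑ t ∈ Finset.range m, (s ∩ Finset.Ico (g t) (g (t + 1))).card = s.card := by
  intro m
  induction m with
  | zero =>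
    intro s h0 hm
    have : s = ∅ := Finset.eq_empty_of_forall_notMem fun x hx =>
      absurd (h0 x hx) (not_le.2 (hm x hx))
    simp [this]
  | succ m ih =>
    intro s h0 hm
    rw [Finset.sum_range_succ]
    have hlast : s ∩ Finset.Ico (g m) (g (m + 1)) = s.filter fun x => g m ≤ x := by
      ext x
      simp only [Finset.mem_inter, Finset.mem_Ico, Finset.mem_filter]
      exact ⟨fun ⟨h1, h2, _⟩ => ⟨h1, h2⟩, fun ⟨h1, h2⟩ => ⟨h1, h2, hm x h1⟩⟩
    have hrest : ∀ t ∈ Finset.range m,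
        (s ∩ Finset.Ico (g t) (g (t + 1))).card
          = ((s.filter fun x => x < g m) ∩ Finset.Ico (g t) (g (t + 1))).card := by
      intro t ht
      congr 1
      ext x
      simp only [Finset.mem_inter, Finset.mem_Ico, Finset.mem_filter]
      constructor
      · rintro ⟨h1, h2, h3⟩
        exact ⟨⟨h1, h3.trans_le (hg (Finset.mem_range.1 ht))⟩, h2, h3⟩
      · rintro ⟨⟨h1, _⟩, h2⟩; exact ⟨h1, h2⟩
    rw [Finset.sum_congr rfl hrest, ih _ (fun x hx => h0 x (Finset.mem_filter.1 hx).1)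
      (fun x hx => (Finset.mem_filter.1 hx).2), hlast]
    rw [← Finset.card_filter_add_card_filter_not (s := s) (p := fun x => x < g m)]
    congr 2
    ext x
    simp [not_lt]

section Lemmas

variable {n d : ℕ}

lemma distrib_apply (u : Fin d → ℕ) (γ : Fin n →₀ ℕ) (i : Fin d) (j : Fin n) :
    distrib n d u γ (i, j)
      = min (pc u ((i : ℕ) + 1)) (pc (⇑γ) ((j : ℕ) + 1)) - max (pc u i) (pc (⇑γ) j) := by
  show (Finsupp.equivFunOnFinite.symm _ : (Fin d × Fin n) →₀ ℕ) (i, j) = _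
  rw [Finsupp.coe_equivFunOnFinite_symm]
  have h1 : (Finset.univ.filter fun i' : Fin d => (i' : ℕ) ≤ (i : ℕ))
      = Finset.univ.filter fun i' : Fin d => (i' : ℕ) < (i : ℕ) + 1 := by
    apply Finset.filter_congr; intro x _; simp [Nat.lt_succ_iff]
  have h2 : (Finset.univ.filter fun j' : Fin n => (j' : ℕ) ≤ (j : ℕ))
      = Finset.univ.filter fun j' : Fin n => (j' : ℕ) < (j : ℕ) + 1 := by
    apply Finset.filter_congr; intro x _; simp [Nat.lt_succ_iff]
  rw [h1, h2]
  rfl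

lemma distrib_apply_card (u : Fin d → ℕ) (γ : Fin n →₀ ℕ) (i : Fin d) (j : Fin n) :
    distrib n d u γ (i, j)
      = ((Finset.Ico (pc u i) (pc u ((i : ℕ) + 1)))
          ∩ (Finset.Ico (pc (⇑γ) j) (pc (⇑γ) ((j : ℕ) + 1)))).card := by
  rw [distrib_apply, Finset.Ico_inter_Ico, Nat.card_Ico]

lemma sum_distrib_row (u : Fin d → ℕ) (γ : Fin n →₀ ℕ) (h : ∑ i, u i ≤ ∑ j, γ j)
    (i : Fin d) : ∑ j, distrib n d u γ (i, j) = u i := by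
  have : ∀ j : Fin n, distrib n d u γ (i, j)
      = ((Finset.Ico (pc u i) (pc u ((i : ℕ) + 1)))
          ∩ (Finset.Ico (pc (⇑γ) (j : ℕ)) (pc (⇑γ) ((j : ℕ) + 1)))).card :=
    fun j => distrib_apply_card u γ i j
  rw [Finset.sum_congr rfl fun j _ => this j]
  rw [Fin.sum_univ_eq_sum_range fun t =>
    ((Finset.Ico (pc u i) (pc u ((i : ℕ) + 1)))
      ∩ (Finset.Ico (pc (⇑γ) t) (pc (⇑γ) (t + 1)))).card]
  rw [sum_card_slices (pc (⇑γ)) (pc_mono _) n _ ?_ ?_]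
  · rw [Nat.card_Ico, pc_succ_le]; omega
  · intro x hx; rw [pc_zero]; exact Nat.zero_le x
  · intro x hx
    rw [Finset.mem_Ico] at hx
    calc x < pc u ((i : ℕ) + 1) := hx.2
    _ ≤ ∑ i', u i' := by rw [← pc_total u d le_rfl]; exact pc_mono u i.2
    _ ≤ ∑ j', γ j' := h
    _ = pc (⇑γ) n := (pc_total _ n le_rfl).symm

lemma sum_distrib_col (u : Fin d → ℕ) (γ : Fin n →₀ ℕ) (h : ∑ j, γ j ≤ ∑ i, u i)
    (j : Fin n) : ∑ i, distrib n d u γ (i, j) = γ j := by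
  have : ∀ i : Fin d, distrib n d u γ (i, j)
      = ((Finset.Ico (pc (⇑γ) j) (pc (⇑γ) ((j : ℕ) + 1)))
          ∩ (Finset.Ico (pc u (i : ℕ)) (pc u ((i : ℕ) + 1)))).card := by
    intro i; rw [distrib_apply_card, Finset.inter_comm]
  rw [Finset.sum_congr rfl fun i _ => this i]
  rw [Fin.sum_univ_eq_sum_range fun t =>
    ((Finset.Ico (pc (⇑γ) j) (pc (⇑γ) ((j : ℕ) + 1)))
      ∩ (Finset.Ico (pc u t) (pc u (t + 1)))).card]
  rw [sum_card_slices (pc u) (pc_mono _) d _ ?_ ?_]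
  · rw [Nat.card_Ico, pc_succ_le]; omega
  · intro x hx; rw [pc_zero]; exact Nat.zero_le x
  · intro x hx
    rw [Finset.mem_Ico] at hx
    calc x < pc (⇑γ) ((j : ℕ) + 1) := hx.2
    _ ≤ ∑ j', γ j' := by rw [← pc_total (⇑γ) n le_rfl]; exact pc_mono _ j.2
    _ ≤ ∑ i', u i' := h
    _ = pc u d := (pc_total _ d le_rfl).symm

lemma mapDomain_snd_apply (a : (Fin d × Fin n) →₀ ℕ) (j : Fin n) :
    Finsupp.mapDomain Prod.snd a j = ∑ i, a (i, j) := by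
  classical
  rw [Finsupp.mapDomain, Finsupp.sum_apply, Finsupp.sum]
  have h1 : ∀ p : Fin d × Fin n, (Finsupp.single p.2 (a p) : Fin n →₀ ℕ) j
      = if p.2 = j then a p else 0 := fun p => Finsupp.single_apply
  rw [Finset.sum_congr rfl fun p _ => h1 p]
  rw [Finset.sum_subset (Finset.subset_univ a.support) (by
    intro p _ hp
    rw [Finsupp.notMem_support_iff] at hp
    simp [hp])]
  rw [Fintype.sum_prod_type]
  refine Finset.sum_congr rfl fun i _ => ?_
  simp


lemma weight_single_eq (a : (Fin d × Fin n) →₀ ℕ) :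
    (Finsupp.weight fun p : Fin d × Fin n => Pi.single p.1 (1 : ℕ)) a
      = fun i => ∑ j, a (i, j) := by
  classical
  funext i
  rw [Finsupp.weight_apply, Finsupp.sum, Finset.sum_apply]
  have h1 : ∀ p : Fin d × Fin n,
      (a p • Pi.single p.1 (1 : ℕ) : Fin d → ℕ) i = if p.1 = i then a p else 0 := by
    intro p
    rcases eq_or_ne p.1 i with h | h
    · simp [h]
    · simp [Pi.single_eq_of_ne (Ne.symm h), h]
  rw [Finset.sum_congr rfl fun p _ => h1 p]
  rw [Finset.sum_subset (Finset.subset_univ a.support) (by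
    intro p _ hp
    rw [Finsupp.notMem_support_iff] at hp
    simp [hp])]
  rw [Fintype.sum_prod_type]
  rw [Finset.sum_eq_single i (fun i' _ h => by simp [h]) (fun h => absurd (Finset.mem_univ i) h)]
  simp

lemma mem_Scomp_rows {u : Fin d → ℕ} {x : MvPolynomial (Fin d × Fin n) ℂ}
    (hx : x ∈ Scomp n d u) {a : (Fin d × Fin n) →₀ ℕ} (ha : coeff a x ≠ 0) :
    ∀ i, ∑ j, a (i, j) = u i := by
  intro i
  have := ((mem_weightedHomogeneousSubmodule _ _ _ _).1 hx) ha
  rw [weight_single_eq] at this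
  exact congrFun this i

lemma monomial_mem_Scomp {u : Fin d → ℕ} {a : (Fin d × Fin n) →₀ ℕ} (c : ℂ)
    (ha : ∀ i, ∑ j, a (i, j) = u i) : (monomial a c) ∈ Scomp n d u := by
  rw [Scomp, mem_weightedHomogeneousSubmodule]
  exact isWeightedHomogeneous_monomial _ _ _ (by rw [weight_single_eq]; funext i; exact ha i)

lemma mem_Vcomp_deg {N : ℕ} {v : MvPolynomial (Fin n) ℂ} (hv : v ∈ Vcomp n N)
    {γ : Fin n →₀ ℕ} (hγ : coeff γ v ≠ 0) : ∑ j, γ j = N := by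
  have h := ((mem_homogeneousSubmodule _ _).1 hv) hγ
  change Finsupp.weight (fun _ => 1) γ = N at h
  rw [← Finsupp.degree_eq_weight_one, Finsupp.degree_apply] at h
  rw [← h]
  exact (Finset.sum_subset (Finset.subset_univ _) (by
    intro p _ hp
    rwa [Finsupp.notMem_support_iff] at hp)).symm

lemma monomial_mem_Vcomp {N : ℕ} {γ : Fin n →₀ ℕ} (c : ℂ) (hγ : ∑ j, γ j = N) :
    (monomial γ c) ∈ Vcomp n N := by
  rw [Vcomp, mem_homogeneousSubmodule]
  refine isHomogeneous_monomial _ ?_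
  rw [Finsupp.degree_apply, Finset.sum_subset (Finset.subset_univ _) (by
    intro p _ hp
    rwa [Finsupp.notMem_support_iff] at hp)]
  exact hγ

lemma piL_monomial (a : (Fin d × Fin n) →₀ ℕ) (c : ℂ) :
    piL n d (monomial a c) = monomial (Finsupp.mapDomain Prod.snd a) c := by
  have : piAlg n d = rename Prod.snd := MvPolynomial.algHom_ext fun p => by simp [piAlg]
  show piAlg n d (monomial a c) = _
  rw [this, rename_monomial]

lemma psi_monomial (u : Fin d → ℕ) (γ : Fin n →₀ ℕ) (c : ℂ) :
    psi n d u (monomial γ c) = monomial (distrib n d u γ) c := by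
  rw [← single_eq_monomial, ← single_eq_monomial]
  exact AddMonoidAlgebra.mapDomainLinearMap_single _ _ _

lemma gen_mem_IR {i k : Fin d} {j l : Fin n} (hik : i < k) (hjl : j < l) :
    (X (i, j) * X (k, l) - X (i, l) * X (k, j) : MvPolynomial (Fin d × Fin n) ℂ)
      ∈ IR n d :=
  Ideal.subset_span ⟨i, k, j, l, hik, hjl, rfl⟩

lemma piL_eq_zero_of_mem_IR {x : MvPolynomial (Fin d × Fin n) ℂ} (hx : x ∈ IR n d) :
    piL n d x = 0 := by
  have hker : IR n d ≤ RingHom.ker (piAlg n d).toRingHom := by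
    rw [IR, Ideal.span_le]
    rintro q ⟨i, k, j, l, _, _, rfl⟩
    have : piAlg n d = rename Prod.snd := MvPolynomial.algHom_ext fun p => by simp [piAlg]
    simp only [SetLike.mem_coe, RingHom.mem_ker, AlgHom.toRingHom_eq_coe,
      RingHom.coe_coe, map_sub, map_mul, this, rename_X]
    ring
  exact hker hx


lemma exists_of_sum_lt {α : Type*} [Fintype α] (a : α → ℕ) (c1 c2 : α → Prop)
    [DecidablePred c1] [DecidablePred c2]
    (h : (∑ p, if c1 p then a p else 0) < ∑ p, if c2 p then a p else 0) :
    ∃ p, c2 p ∧ ¬c1 p ∧ a p ≠ 0 := by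
  by_contra hc
  push_neg at hc
  refine absurd (Finset.sum_le_sum fun p _ => ?_) (not_le.2 h)
  by_cases h2 : c2 p
  · by_cases h1 : c1 p
    · simp [h1, h2]
    · simp [h1, h2, hc p h2 h1]
  · simp [h2]

/-- a "sorted" (staircase) matrix with row sums `u` is `distrib` of its column sums. -/
lemma eq_distrib_of_sorted (u : Fin d → ℕ) (a : (Fin d × Fin n) →₀ ℕ)
    (ha : ∀ i, ∑ j, a (i, j) = u i)
    (hs : ∀ p q : Fin d × Fin n, p.1 < q.1 → q.2 < p.2 → a p ≠ 0 → a q = 0) :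
    a = distrib n d u (Finsupp.mapDomain Prod.snd a) := by
  classical
  set γ : Fin n →₀ ℕ := Finsupp.mapDomain Prod.snd a with hγ
  set B : ℕ → ℕ → ℕ := fun s t =>
    ∑ p : Fin d × Fin n, if (p.1 : ℕ) < s ∧ (p.2 : ℕ) < t then a p else 0 with hB
  have hγtot : ∑ j, γ j = ∑ i, u i := by
    rw [Finset.sum_congr rfl fun j _ => mapDomain_snd_apply a j]
    rw [← Finset.sum_congr rfl fun (i : Fin d) _ => ha i]
    rw [Finset.sum_comm]
  have hBu : ∀ s t, n ≤ t → B s t = pc u s := by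
    intro s t ht
    simp only [hB]
    have : ∀ p : Fin d × Fin n, (if (p.1 : ℕ) < s ∧ (p.2 : ℕ) < t then a p else 0)
        = if (p.1 : ℕ) < s then a p else 0 := by
      intro p
      have : (p.2 : ℕ) < t := p.2.2.trans_le ht
      by_cases h : (p.1 : ℕ) < s <;> simp [h, this]
    rw [Finset.sum_congr rfl fun p _ => this p, Fintype.sum_prod_type]
    rw [Finset.sum_congr rfl fun (i : Fin d) _ =>
      (by by_cases h : (i : ℕ) < s <;> simp [h, ha i] :
        (∑ j, if (i : ℕ) < s then a (i, j) else 0) = if (i : ℕ) < s then u i else 0)]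
    rw [pc, Finset.sum_filter]
  have hBγ : ∀ s t, d ≤ s → B s t = pc (⇑γ) t := by
    intro s t hsd
    simp only [hB]
    have : ∀ p : Fin d × Fin n, (if (p.1 : ℕ) < s ∧ (p.2 : ℕ) < t then a p else 0)
        = if (p.2 : ℕ) < t then a p else 0 := by
      intro p
      have : (p.1 : ℕ) < s := p.1.2.trans_le hsd
      by_cases h : (p.2 : ℕ) < t <;> simp [h, this]
    rw [Finset.sum_congr rfl fun p _ => this p, Fintype.sum_prod_type_right]
    rw [Finset.sum_congr rfl fun (j : Fin n) _ =>
      (by by_cases h : (j : ℕ) < t <;> simp [h, hγ, (mapDomain_snd_apply a j).symm] :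
        (∑ i, if (j : ℕ) < t then a (i, j) else 0) = if (j : ℕ) < t then γ j else 0)]
    rw [pc, Finset.sum_filter]
  have hmono_t : ∀ s t t', t ≤ t' → B s t ≤ B s t' := by
    intro s t t' htt'
    refine Finset.sum_le_sum fun p _ => ?_
    split_ifs with h1 h2 <;> omega
  have hmono_s : ∀ s s' t, s ≤ s' → B s t ≤ B s' t := by
    intro s s' t hss'
    refine Finset.sum_le_sum fun p _ => ?_
    split_ifs with h1 h2 <;> omega
  have hup1 : ∀ s t, B s t ≤ pc u s := fun s t => by
    rw [← hBu s (max t n) (le_max_right _ _)]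
    exact hmono_t _ _ _ (le_max_left _ _)
  have hup2 : ∀ s t, B s t ≤ pc (⇑γ) t := fun s t => by
    rw [← hBγ (max s d) t (le_max_right _ _)]
    exact hmono_s _ _ _ (le_max_left _ _)
  have hlow : ∀ s t, min (pc u s) (pc (⇑γ) t) ≤ B s t := by
    intro s t
    by_contra hcon
    push_neg at hcon
    have hc1 : B s t < B s n := by
      rw [hBu s n le_rfl]
      exact hcon.trans_le (min_le_left _ _)
    have hc2 : B s t < B d t := by
      rw [hBγ d t le_rfl]
      exact hcon.trans_le (min_le_right _ _)
    obtain ⟨p, hp2, hp1, hpne⟩ := exists_of_sum_lt a _ _ hc1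
    obtain ⟨q, hq2, hq1, hqne⟩ := exists_of_sum_lt a _ _ hc2
    have hps : (p.1 : ℕ) < s := hp2.1
    have hpt : ¬((p.2 : ℕ) < t) := fun h => hp1 ⟨hp2.1, h⟩
    have hqt : (q.2 : ℕ) < t := hq2.2
    have hqs : ¬((q.1 : ℕ) < s) := fun h => hq1 ⟨h, hq2.2⟩
    have h1 : p.1 < q.1 := by rw [Fin.lt_def]; omega
    have h2 : q.2 < p.2 := by rw [Fin.lt_def]; omega
    exact hqne (hs p q h1 h2 hpne)
  have hBeq : ∀ s t, B s t = min (pc u s) (pc (⇑γ) t) := fun s t =>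
    le_antisymm (le_min (hup1 s t) (hup2 s t)) (hlow s t)
  have hrec : ∀ (i : Fin d) (j : Fin n),
      B ((i : ℕ) + 1) ((j : ℕ) + 1) + B i j = B ((i : ℕ) + 1) j + B i ((j : ℕ) + 1) + a (i, j) := by
    intro i j
    simp only [hB]
    have key : ∀ p : Fin d × Fin n,
        (if (p.1 : ℕ) < (i : ℕ) + 1 ∧ (p.2 : ℕ) < (j : ℕ) + 1 then a p else 0)
          + (if (p.1 : ℕ) < (i : ℕ) ∧ (p.2 : ℕ) < (j : ℕ) then a p else 0)
        = (if (p.1 : ℕ) < (i : ℕ) + 1 ∧ (p.2 : ℕ) < (j : ℕ) then a p else 0)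
          + (if (p.1 : ℕ) < (i : ℕ) ∧ (p.2 : ℕ) < (j : ℕ) + 1 then a p else 0)
          + (if p = (i, j) then a p else 0) := by
      intro p
      rcases eq_or_ne p (i, j) with h | h
      · subst h
        simp only [if_pos rfl]
        split_ifs <;> omega
      · rw [if_neg h]
        have h' : ¬((p.1 : ℕ) = (i : ℕ) ∧ (p.2 : ℕ) = (j : ℕ)) := by
          intro hc
          exact h (Prod.ext (Fin.ext hc.1) (Fin.ext hc.2))
        split_ifs <;> omega
    have := Finset.sum_congr rfl fun p (_ : p ∈ (Finset.univ : Finset (Fin d × Fin n))) => key p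
    rw [Finset.sum_add_distrib, Finset.sum_add_distrib, Finset.sum_add_distrib] at this
    rw [this, Finset.sum_ite_eq' Finset.univ (i, j) a, if_pos (Finset.mem_univ _)]
  refine Finsupp.ext fun p => ?_
  obtain ⟨i, j⟩ := p
  rw [distrib_apply]
  have h00 := hBeq i j
  have h01 := hBeq i ((j : ℕ) + 1)
  have h10 := hBeq ((i : ℕ) + 1) j
  have h11 := hBeq ((i : ℕ) + 1) ((j : ℕ) + 1)
  have hru : pc u (i : ℕ) ≤ pc u ((i : ℕ) + 1) := pc_mono u (Nat.le_succ _)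
  have hrγ : pc (⇑γ) (j : ℕ) ≤ pc (⇑γ) ((j : ℕ) + 1) := pc_mono _ (Nat.le_succ _)
  have := hrec i j
  omega


/-- the "alignment" measure: straightening moves strictly increase it. -/
def mu {n d : ℕ} (a : (Fin d × Fin n) →₀ ℕ) : ℕ :=
  ∑ p : Fin d × Fin n, a p * ((p.1 : ℕ) * (p.2 : ℕ))

lemma mu_add (f g : (Fin d × Fin n) →₀ ℕ) : mu (f + g) = mu f + mu g := by
  unfold mu
  rw [← Finset.sum_add_distrib]
  refine Finset.sum_congr rfl fun p _ => ?_
  rw [Finsupp.add_apply, add_mul]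

lemma mu_single (r : Fin d × Fin n) : mu (Finsupp.single r 1) = (r.1 : ℕ) * (r.2 : ℕ) := by
  unfold mu
  rw [Finset.sum_eq_single r (fun r' _ h => by
    rw [Finsupp.single_apply, if_neg (fun hc => h hc.symm), zero_mul])
    (fun h => absurd (Finset.mem_univ r) h)]
  rw [Finsupp.single_apply, if_pos rfl, one_mul]

lemma mu_le (a : (Fin d × Fin n) →₀ ℕ) : mu a ≤ (∑ p : Fin d × Fin n, a p) * (d * n) := by
  rw [Finset.sum_mul]
  refine Finset.sum_le_sum fun p _ => ?_
  exact Nat.mul_le_mul_left _ (Nat.mul_le_mul (le_of_lt p.1.2) (le_of_lt p.2.2))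

lemma row_add (f g : (Fin d × Fin n) →₀ ℕ) (i : Fin d) :
    ∑ j, (f + g) (i, j) = (∑ j, f (i, j)) + ∑ j, g (i, j) := by
  rw [← Finset.sum_add_distrib]
  exact Finset.sum_congr rfl fun j _ => Finsupp.add_apply f g (i, j)

lemma row_single (r : Fin d × Fin n) (i : Fin d) :
    ∑ j, (Finsupp.single r (1 : ℕ)) (i, j) = if r.1 = i then 1 else 0 := by
  rcases eq_or_ne r.1 i with h | h
  · rw [if_pos h]
    rw [Finset.sum_eq_single r.2 (fun j _ hj => by
      rw [Finsupp.single_apply, if_neg, ]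
      intro hc
      exact hj (congrArg Prod.snd hc).symm) (fun hc => absurd (Finset.mem_univ r.2) hc)]
    rw [Finsupp.single_apply, if_pos (by rw [← h]), ]
  · rw [if_neg h]
    refine Finset.sum_eq_zero fun j _ => ?_
    rw [Finsupp.single_apply, if_neg]
    intro hc
    exact h (congrArg Prod.fst hc)

lemma straighten_aux (u : Fin d → ℕ) :
    ∀ (k : ℕ) (a : (Fin d × Fin n) →₀ ℕ), (∀ i, ∑ j, a (i, j) = u i) →
      (∑ i, u i) * (d * n) + 1 ≤ mu a + k →
      (monomial a 1 - monomial (distrib n d u (Finsupp.mapDomain Prod.snd a)) 1 :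
        MvPolynomial (Fin d × Fin n) ℂ) ∈ IR n d := by
  intro k
  induction k with
  | zero =>
    intro a ha hk
    exfalso
    have h1 : ∑ p : Fin d × Fin n, a p = ∑ i, u i := by
      rw [Fintype.sum_prod_type]
      exact Finset.sum_congr rfl fun i _ => ha i
    have := mu_le a
    rw [h1] at this
    omega
  | succ k ih =>
    intro a ha hk
    by_cases hinv : ∃ p q : Fin d × Fin n, p.1 < q.1 ∧ q.2 < p.2 ∧ a p ≠ 0 ∧ a q ≠ 0
    · obtain ⟨p, q, hpq1, hpq2, hp, hq⟩ := hinv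
      have hpq : p ≠ q := fun h => absurd (h ▸ hpq1) (lt_irrefl _)
      have hpq1' : (p.1 : ℕ) < (q.1 : ℕ) := hpq1
      have hpq2' : (q.2 : ℕ) < (p.2 : ℕ) := hpq2
      set b : (Fin d × Fin n) →₀ ℕ := a - Finsupp.single p 1 - Finsupp.single q 1 with hb
      have hab : a = b + Finsupp.single p 1 + Finsupp.single q 1 := by
        have hp1 : 1 ≤ a p := Nat.one_le_iff_ne_zero.2 hp
        have hq1 : 1 ≤ a q := Nat.one_le_iff_ne_zero.2 hq
        ext r
        simp only [hb, Finsupp.add_apply, Finsupp.tsub_apply,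
          Finsupp.single_apply]
        by_cases h1 : p = r
        · subst h1
          rw [if_pos rfl, if_neg (Ne.symm hpq)]
          omega
        · rw [if_neg h1]
          by_cases h2 : q = r
          · subst h2
            rw [if_pos rfl]
            omega
          · rw [if_neg h2]
            omega
      clear_value b
      set a' : (Fin d × Fin n) →₀ ℕ :=
        b + Finsupp.single (p.1, q.2) 1 + Finsupp.single (q.1, p.2) 1 with ha'def
      clear_value a'
      have hkey : a + Finsupp.single (p.1, q.2) 1 + Finsupp.single (q.1, p.2) 1
          = a' + Finsupp.single p 1 + Finsupp.single q 1 := by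
        rw [hab, ha'def]
        abel
      have hrowkey : ∀ i, ∑ j, a' (i, j) = u i := by
        intro i
        have h1 := congrArg (fun f : (Fin d × Fin n) →₀ ℕ => ∑ j, f (i, j)) hkey
        simp only [row_add, row_single] at h1
        have := ha i
        split_ifs at h1 <;> omega
      have hcolkey : Finsupp.mapDomain Prod.snd a' = Finsupp.mapDomain Prod.snd a := by
        have h1 := congrArg (Finsupp.mapDomain Prod.snd) hkey
        simp only [Finsupp.mapDomain_add, Finsupp.mapDomain_single] at h1
        have h2 : Finsupp.mapDomain Prod.snd a + (Finsupp.single q.2 1 + Finsupp.single p.2 1)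
            = Finsupp.mapDomain Prod.snd a' + (Finsupp.single q.2 1 + Finsupp.single p.2 1) := by
          rw [← add_assoc, ← add_assoc]
          rw [show (Finsupp.mapDomain Prod.snd a + Finsupp.single q.2 1 + Finsupp.single p.2 1 :
            Fin n →₀ ℕ) = Finsupp.mapDomain Prod.snd a + Finsupp.single ((p.1, q.2) :
              Fin d × Fin n).2 1 + Finsupp.single ((q.1, p.2) : Fin d × Fin n).2 1 from rfl, h1]
          have e1 : (Finsupp.single (p.2 : Fin n) (1 : ℕ)) = Finsupp.single (p.2 : Fin n) 1 := rfl
          abel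
        exact (add_right_cancel h2).symm
      have hmu : mu a < mu a' := by
        have h1 := congrArg (mu (n := n) (d := d)) hkey
        simp only [mu_add, mu_single] at h1
        have hprod : (p.1 : ℕ) * (p.2 : ℕ) + (q.1 : ℕ) * (q.2 : ℕ) + 1
            ≤ (p.1 : ℕ) * (q.2 : ℕ) + (q.1 : ℕ) * (p.2 : ℕ) := by
          nlinarith
        omega
      have hmonstep : (monomial a 1 - monomial a' 1 :
          MvPolynomial (Fin d × Fin n) ℂ) ∈ IR n d := by
        have hg : (X (p.1, q.2) * X (q.1, p.2) - X (p.1, p.2) * X (q.1, q.2) :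
            MvPolynomial (Fin d × Fin n) ℂ) ∈ IR n d := gen_mem_IR hpq1 hpq2
        have e1 : (monomial a (1 : ℂ) : MvPolynomial (Fin d × Fin n) ℂ)
            = monomial b 1 * (X (p.1, p.2) * X (q.1, q.2)) := by
          rw [hab, X, X, ← single_eq_monomial, monomial_mul, monomial_mul]
          rw [single_eq_monomial]
          norm_num
          exact add_assoc _ _ _
        have e2 : (monomial a' (1 : ℂ) : MvPolynomial (Fin d × Fin n) ℂ)
            = monomial b 1 * (X (p.1, q.2) * X (q.1, p.2)) := by
          rw [ha'def, X, X, ← single_eq_monomial, monomial_mul, monomial_mul]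
          rw [single_eq_monomial]
          norm_num
          exact add_assoc _ _ _
        have e3 : (monomial a 1 - monomial a' 1 : MvPolynomial (Fin d × Fin n) ℂ)
            = -(monomial b 1 * (X (p.1, q.2) * X (q.1, p.2)
                - X (p.1, p.2) * X (q.1, q.2))) := by
          rw [e1, e2]
          ring
        rw [e3]
        exact neg_mem (Ideal.mul_mem_left _ _ hg)
      have hstep2 := ih a' hrowkey (by omega)
      rw [hcolkey] at hstep2
      have heq : (monomial a 1 - monomial (distrib n d u (Finsupp.mapDomain Prod.snd a)) 1 :
          MvPolynomial (Fin d × Fin n) ℂ)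
          = (monomial a 1 - monomial a' 1)
            + (monomial a' 1 - monomial (distrib n d u (Finsupp.mapDomain Prod.snd a)) 1) := by
        ring
      rw [heq]
      exact add_mem hmonstep hstep2
    · push_neg at hinv
      rw [← eq_distrib_of_sorted u a ha hinv, sub_self]
      exact zero_mem _

lemma straighten (u : Fin d → ℕ) (a : (Fin d × Fin n) →₀ ℕ)
    (ha : ∀ i, ∑ j, a (i, j) = u i) :
    (monomial a 1 - monomial (distrib n d u (Finsupp.mapDomain Prod.snd a)) 1 :
      MvPolynomial (Fin d × Fin n) ℂ) ∈ IR n d :=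
  straighten_aux u ((∑ i, u i) * (d * n) + 1) a ha (by omega)


lemma psi_maps_Vcomp {u : Fin d → ℕ} {v : MvPolynomial (Fin n) ℂ}
    (hv : v ∈ Vcomp n (∑ i, u i)) : psi n d u v ∈ Scomp n d u := by
  rw [v.as_sum, map_sum]
  refine Submodule.sum_mem _ fun γ hγ => ?_
  rw [psi_monomial]
  refine monomial_mem_Scomp _ fun i => ?_
  exact sum_distrib_row u γ (le_of_eq (mem_Vcomp_deg hv (mem_support_iff.1 hγ)).symm) i

lemma piL_maps_Scomp {u : Fin d → ℕ} {x : MvPolynomial (Fin d × Fin n) ℂ}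
    (hx : x ∈ Scomp n d u) : piL n d x ∈ Vcomp n (∑ i, u i) := by
  rw [x.as_sum, map_sum]
  refine Submodule.sum_mem _ fun a ha => ?_
  rw [piL_monomial]
  refine monomial_mem_Vcomp _ ?_
  rw [Finset.sum_congr rfl fun (j : Fin n) _ => mapDomain_snd_apply a j, Finset.sum_comm]
  exact Finset.sum_congr rfl fun (i : Fin d) _ =>
    mem_Scomp_rows hx (mem_support_iff.1 ha) i

lemma piL_psi_eq {u : Fin d → ℕ} {v : MvPolynomial (Fin n) ℂ}
    (hv : v ∈ Vcomp n (∑ i, u i)) : piL n d (psi n d u v) = v := by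
  rw [v.as_sum, map_sum, map_sum]
  refine Finset.sum_congr rfl fun γ hγ => ?_
  rw [psi_monomial, piL_monomial]
  have hMd : Finsupp.mapDomain Prod.snd (distrib n d u γ) = γ :=
    Finsupp.ext fun j => by
      rw [mapDomain_snd_apply]
      exact sum_distrib_col u γ (le_of_eq (mem_Vcomp_deg hv (mem_support_iff.1 hγ))) j
  rw [hMd]

lemma sub_psi_piL_mem_IR {u : Fin d → ℕ} {x : MvPolynomial (Fin d × Fin n) ℂ}
    (hx : x ∈ Scomp n d u) : x - psi n d u (piL n d x) ∈ IR n d := by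
  rw [x.as_sum, map_sum, map_sum, ← Finset.sum_sub_distrib]
  refine Submodule.sum_mem _ fun a ha => ?_
  rw [piL_monomial, psi_monomial]
  have h := straighten u a fun i => mem_Scomp_rows hx (mem_support_iff.1 ha) i
  have h2 := Ideal.mul_mem_left (IR n d) (C (coeff a x)) h
  rw [mul_sub, C_mul_monomial, C_mul_monomial, mul_one] at h2
  exact h2

end Lemmas





/-- equation (4.1): for every `u ∈ ℤ^d_{≥0}`,
`S_u = (I_R)_u ⊕ ψ_u(V_{|u|})` as `ℂ`-vector spaces. -/
theorem stmt_4 (n d : ℕ) (hn : 0 < n) (hd : 0 < d) (u : Fin d → ℕ) :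
    Disjoint (Submodule.restrictScalars ℂ (IR n d) ⊓ Scomp n d u)
        (Submodule.map (psi n d u) (Vcomp n (∑ i, u i))) ∧
      (Submodule.restrictScalars ℂ (IR n d) ⊓ Scomp n d u) ⊔
          Submodule.map (psi n d u) (Vcomp n (∑ i, u i)) = Scomp n d u := by
  constructor
  · rw [Submodule.disjoint_def]
    rintro x ⟨hxIR, _⟩ hxψ
    obtain ⟨v, hv, rfl⟩ := Submodule.mem_map.1 hxψ
    have h0 : piL n d (psi n d u v) = 0 := piL_eq_zero_of_mem_IR hxIR
    rw [piL_psi_eq hv] at h0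
    rw [h0, map_zero]
  · apply le_antisymm
    · rw [sup_le_iff]
      refine ⟨inf_le_right, ?_⟩
      intro x hx
      obtain ⟨v, hv, rfl⟩ := Submodule.mem_map.1 hx
      exact psi_maps_Vcomp hv
    · intro x hx
      have h1 : piL n d x ∈ Vcomp n (∑ i, u i) := piL_maps_Scomp hx
      have h2 : psi n d u (piL n d x) ∈ Submodule.map (psi n d u) (Vcomp n (∑ i, u i)) :=
        Submodule.mem_map.2 ⟨_, h1, rfl⟩
      have h3 : x - psi n d u (piL n d x)
          ∈ Submodule.restrictScalars ℂ (IR n d) ⊓ Scomp n d u :=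
        ⟨sub_psi_piL_mem_IR hx, Submodule.sub_mem _ hx (psi_maps_Vcomp h1)⟩
      have hx' : x = (x - psi n d u (piL n d x)) + psi n d u (piL n d x) := by ring
      rw [hx']
      exact Submodule.add_mem _ (Submodule.mem_sup_left h3) (Submodule.mem_sup_right h2)

end BorderComon
end
end

section
/- Let n and d be positive integers and let F ∈ (ℂ^n)^{⊗d} be a concise symmetric tensor with corresponding degree-d polynomial p_F. Let J ⊆ S be a homogeneous ideal with J ⊆ Ann(F) such that π(J_{(d,0,…,0)}) ⊆ π(J_𝟏). Then ρ(J) ⊆ Ann(p_F), where ρ(J) is the image ideal of J under ρ. -/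
/-!
Common setup, following the paper "On the abundance of minimal border rank symmetric
tensors verifying Comon's conjecture".

* `S = ℂ[α_{i,j} : 1 ≤ i ≤ d, 1 ≤ j ≤ n]` is modeled as `MvPolynomial (Fin d × Fin n) ℂ`,
  with the `ℤ^d`-grading in which `deg α_{i,j} = e_i`; `Scomp n d u` is the
  multidegree-`u` component (`u : Fin d → ℕ`).
* `V = ℂ[β_1,…,β_n]` is modeled as `MvPolynomial (Fin n) ℂ` with its standard grading;
  `Vcomp n N` is the degree-`N` component.
* The graded duals `T` and `P` are modeled by the same polynomial rings, with `S`
  (resp. `V`) acting by differentiation (`apolar`); `ann F` is the apolar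
  (annihilator) ideal of `F`.
* A tensor `F ∈ (ℂ^n)^{⊗d}` is an element of the multidegree-`(1,…,1)` component
  `Scomp n d (fun _ => 1)` (a multilinear form in the `x_{i,j}`).
-/

open MvPolynomial Submodule Module

noncomputable section

namespace BorderComon

/-! ### auxiliary lemmas -/

variable {σ : Type*}


/-- coefficient of differentiation -/
def dfc (a b : σ →₀ ℕ) : ℂ := ∏ i ∈ a.support, ((b i).descFactorial (a i) : ℂ)

/-- `diffMon` as a linear map in `F`. -/
def diffL (a : σ →₀ ℕ) : MvPolynomial σ ℂ →ₗ[ℂ] MvPolynomial σ ℂ :=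
  Finsupp.lsum ℂ (fun b : σ →₀ ℕ =>
    LinearMap.toSpanSingleton ℂ _ (dfc a b • monomial (b - a) (1 : ℂ))) ∘ₗ
    (AddMonoidAlgebra.coeffLinearEquiv ℂ).toLinearMap

lemma diffMon_eq (a : σ →₀ ℕ) (F : MvPolynomial σ ℂ) : diffMon a F = diffL a F := by
  rw [diffMon]
  show _ = ∑ b ∈ F.support, F.coeff b • (dfc a b • monomial (b - a) (1:ℂ))
  refine Finset.sum_congr rfl fun b _ => ?_
  rw [smul_smul]
  rfl

lemma diffL_monomial (a b : σ →₀ ℕ) (c : ℂ) :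
    diffL a (monomial b c) = (c * dfc a b) • monomial (b - a) (1 : ℂ) := by
  show Finsupp.sum (AddMonoidAlgebra.coeff (monomial b c)) _ = _
  rw [sum_monomial_eq (by simp)]
  show c • (dfc a b • monomial (b - a) (1:ℂ)) = _
  rw [smul_smul]

lemma Nat.descFactorial_add' (n k l : ℕ) :
    n.descFactorial k * (n - k).descFactorial l = n.descFactorial (k + l) := by
  induction l with
  | zero => simp
  | succ l ih =>
    rw [Nat.descFactorial_succ, ← Nat.add_assoc, Nat.descFactorial_succ, ← ih,
      Nat.sub_sub]
    ring

lemma dfc_mul (a a' b : σ →₀ ℕ) : dfc a' b * dfc a (b - a') = dfc (a' + a) b := by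
  classical
  have h1 : dfc a' b = ∏ i ∈ a'.support ∪ a.support, ((b i).descFactorial (a' i) : ℂ) := by
    rw [dfc]; apply Finset.prod_subset Finset.subset_union_left
    intro x _ hx
    rw [Finsupp.notMem_support_iff.mp hx]; simp
  have h2 : dfc a (b - a') = ∏ i ∈ a'.support ∪ a.support,
      (((b - a') i).descFactorial (a i) : ℂ) := by
    rw [dfc]; apply Finset.prod_subset Finset.subset_union_right
    intro x _ hx
    rw [Finsupp.notMem_support_iff.mp hx]; simp
  have h3 : dfc (a' + a) b = ∏ i ∈ a'.support ∪ a.support,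
      ((b i).descFactorial ((a' + a) i) : ℂ) := by
    rw [dfc]; apply Finset.prod_subset Finsupp.support_add
    intro x _ hx
    rw [Finsupp.notMem_support_iff.mp hx]; simp
  rw [h1, h2, h3, ← Finset.prod_mul_distrib]
  refine Finset.prod_congr rfl fun i _ => ?_
  rw [Finsupp.tsub_apply, Finsupp.add_apply, ← Nat.cast_mul, Nat.descFactorial_add']

lemma diffL_comp (a a' : σ →₀ ℕ) (F : MvPolynomial σ ℂ) :
    diffL a (diffL a' F) = diffL (a' + a) F := by
  induction F using MvPolynomial.induction_on' with
  | monomial b c =>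
    rw [diffL_monomial, map_smul, diffL_monomial, diffL_monomial, smul_smul,
      one_mul, mul_assoc c, dfc_mul, tsub_tsub]

  | add p q hp hq => rw [map_add, map_add, map_add, hp, hq]

lemma apolar_monomial (F : MvPolynomial σ ℂ) (a : σ →₀ ℕ) (c : ℂ) :
    apolar F (monomial a c) = c • diffL a F := by
  rw [apolar]
  show Finsupp.sum (AddMonoidAlgebra.coeff (monomial a c)) _ = _
  rw [sum_monomial_eq (by simp)]
  show c • diffMon a F = _
  rw [diffMon_eq]

lemma apolar_apply (F ψ : MvPolynomial σ ℂ) :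
    apolar F ψ = ∑ a ∈ ψ.support, ψ.coeff a • diffL a F := by
  rw [apolar]
  show ∑ a ∈ ψ.support, ψ.coeff a • diffMon a F = _
  refine Finset.sum_congr rfl fun a _ => ?_
  rw [diffMon_eq]

lemma apolar_add_left (F G ψ : MvPolynomial σ ℂ) :
    apolar (F + G) ψ = apolar F ψ + apolar G ψ := by
  rw [apolar_apply, apolar_apply, apolar_apply, ← Finset.sum_add_distrib]
  refine Finset.sum_congr rfl fun a _ => ?_
  rw [map_add, smul_add]

lemma apolar_smul_left (c : ℂ) (F ψ : MvPolynomial σ ℂ) :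
    apolar (c • F) ψ = c • apolar F ψ := by
  rw [apolar_apply, apolar_apply, Finset.smul_sum]
  refine Finset.sum_congr rfl fun a _ => ?_
  rw [map_smul, smul_comm]

lemma apolar_zero_left (ψ : MvPolynomial σ ℂ) : apolar (0 : MvPolynomial σ ℂ) ψ = 0 := by
  rw [apolar_apply]
  refine Finset.sum_eq_zero fun a _ => ?_
  rw [map_zero, smul_zero]

lemma apolar_mul (F φ ψ : MvPolynomial σ ℂ) :
    apolar F (φ * ψ) = apolar (apolar F ψ) φ := by
  induction φ using MvPolynomial.induction_on' with
  | monomial a c =>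
    induction ψ using MvPolynomial.induction_on' with
    | monomial a' c' =>
      rw [monomial_mul, apolar_monomial, apolar_monomial, apolar_monomial, map_smul,
        smul_smul, diffL_comp, mul_comm c c']
      rw [add_comm a a']
    | add p q hp hq =>
      rw [mul_add, map_add, hp, hq, map_add, apolar_add_left]
  | add p q hp hq =>
    rw [add_mul, map_add, hp, hq, map_add]


section util

variable {n : ℕ}

lemma dfc_eq_zero {a b : σ →₀ ℕ} (h : ∃ i, b i < a i) : dfc a b = 0 := by
  classical
  obtain ⟨i, hi⟩ := h
  rw [dfc]
  refine Finset.prod_eq_zero (i := i) (Finsupp.mem_support_iff.mpr (by omega)) ?_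
  rw [Nat.cast_eq_zero, Nat.descFactorial_eq_zero_iff_lt]; exact hi

lemma dfc_self (a : σ →₀ ℕ) : dfc a a = ∏ i ∈ a.support, ((a i).factorial : ℂ) := by
  refine Finset.prod_congr rfl fun i _ => ?_
  rw [Nat.descFactorial_self]

lemma dfc_self_ne_zero (a : σ →₀ ℕ) : dfc a a ≠ 0 := by
  rw [dfc_self]
  refine Finset.prod_ne_zero_iff.mpr fun i _ => ?_
  exact_mod_cast (Nat.factorial_ne_zero _)

/-- finite total degree -/
def degF {n : ℕ} (b : Fin n →₀ ℕ) : ℕ := ∑ j, b j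

lemma degree_eq_degF (b : Fin n →₀ ℕ) : Finsupp.degree b = degF b := by
  rw [Finsupp.degree, degF]
  exact Finset.sum_subset (Finset.subset_univ _) (by
    intro x _ hx
    exact Finsupp.notMem_support_iff.mp hx)

lemma isHomog_iff_degF (q : MvPolynomial (Fin n) ℂ) (N : ℕ) :
    q.IsHomogeneous N ↔ ∀ b, q.coeff b ≠ 0 → degF b = N := by
  unfold MvPolynomial.IsHomogeneous MvPolynomial.IsWeightedHomogeneous
  constructor
  · intro h b hb
    rw [← degree_eq_degF, Finsupp.degree_eq_weight_one]
    exact h hb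
  · intro h b hb
    change Finsupp.weight (fun _ => 1) b = N
    rw [← Finsupp.degree_eq_weight_one, degree_eq_degF]
    exact h b hb

lemma exists_lt_of_degF_lt {a b : Fin n →₀ ℕ} (h : degF b < degF a) : ∃ j, b j < a j := by
  by_contra hc
  push_neg at hc
  exact absurd (Finset.sum_le_sum fun j _ => hc j) (not_le.mpr h)

lemma eq_of_le_of_degF_eq {a b : Fin n →₀ ℕ} (hle : ∀ j, a j ≤ b j)
    (h : degF a = degF b) : a = b := by
  ext j
  exact (Finset.sum_eq_sum_iff_of_le fun i _ => hle i).mp h j (Finset.mem_univ j)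

lemma degF_tsub {a b : Fin n →₀ ℕ} (hle : ∀ j, a j ≤ b j) :
    degF (b - a) = degF b - degF a := by
  have : degF (b - a) + degF a = degF b := by
    rw [degF, degF, degF, ← Finset.sum_add_distrib]
    refine Finset.sum_congr rfl fun j _ => ?_
    rw [Finsupp.tsub_apply]
    have := hle j
    omega
  omega

/-- the pairing-degree lemma: apolar maps `V_dp × V_dφ` to `V_{dp - dφ}`. -/
lemma apolar_isHomog {p φ : MvPolynomial (Fin n) ℂ} {dp dφ : ℕ}
    (hp : p.IsHomogeneous dp) (hφ : φ.IsHomogeneous dφ) :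
    apolar p φ ∈ homogeneousSubmodule (Fin n) ℂ (dp - dφ) := by
  classical
  rw [apolar_apply]
  refine Submodule.sum_mem _ fun a ha => Submodule.smul_mem _ _ ?_
  rw [show p = ∑ v ∈ p.support, monomial v (p.coeff v) from (p.support_sum_monomial_coeff).symm]
  rw [map_sum]
  refine Submodule.sum_mem _ fun b hb => ?_
  rw [diffL_monomial]
  by_cases hex : ∃ j, b j < a j
  · rw [dfc_eq_zero hex, mul_zero, zero_smul]
    exact Submodule.zero_mem _
  · push_neg at hex
    refine Submodule.smul_mem _ _ ?_
    rw [mem_homogeneousSubmodule]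
    refine isHomogeneous_monomial _ ?_
    rw [degree_eq_degF, degF_tsub hex,
      (isHomog_iff_degF p dp).mp hp b (by rwa [MvPolynomial.mem_support_iff] at hb),
      (isHomog_iff_degF φ dφ).mp hφ a (by rwa [MvPolynomial.mem_support_iff] at ha)]

lemma apolar_eq_zero_of_lt {p φ : MvPolynomial (Fin n) ℂ} {dp dφ : ℕ}
    (hp : p.IsHomogeneous dp) (hφ : φ.IsHomogeneous dφ) (h : dp < dφ) :
    apolar p φ = 0 := by
  classical
  rw [apolar_apply]
  refine Finset.sum_eq_zero fun a ha => ?_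
  rw [show p = ∑ v ∈ p.support, monomial v (p.coeff v) from (p.support_sum_monomial_coeff).symm]
  rw [map_sum]
  have : ∀ b ∈ p.support, diffL a (monomial b (p.coeff b)) = 0 := by
    intro b hb
    rw [diffL_monomial, dfc_eq_zero, mul_zero, zero_smul]
    apply exists_lt_of_degF_lt
    rw [(isHomog_iff_degF p dp).mp hp b (by rwa [MvPolynomial.mem_support_iff] at hb),
      (isHomog_iff_degF φ dφ).mp hφ a (by rwa [MvPolynomial.mem_support_iff] at ha)]
    exact h
  rw [Finset.sum_congr rfl this, Finset.sum_const_zero, smul_zero]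

/-- homogeneous polynomial annihilated by all same-degree monomial differential
operators is zero. -/
lemma eq_zero_of_apolar_all {q : MvPolynomial (Fin n) ℂ} {N : ℕ}
    (hq : q.IsHomogeneous N)
    (h : ∀ γ : Fin n →₀ ℕ, degF γ = N → apolar q (monomial γ (1 : ℂ)) = 0) : q = 0 := by
  classical
  by_contra hne
  obtain ⟨b, hb⟩ := (MvPolynomial.support_nonempty.mpr hne)
  have hbmem := hb
  rw [MvPolynomial.mem_support_iff] at hb
  have hdb : degF b = N := (isHomog_iff_degF q N).mp hq b hb
  have h0 := h b hdb
  rw [apolar_monomial, one_smul] at h0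
  have hc := congrArg (MvPolynomial.coeff 0) h0
  rw [show diffL b q = ∑ v ∈ q.support, diffL b (monomial v (q.coeff v)) by
       rw [← map_sum, q.support_sum_monomial_coeff], MvPolynomial.coeff_sum] at hc
  rw [Finset.sum_eq_single b ?h1 ?h2] at hc
  · rw [diffL_monomial, MvPolynomial.coeff_smul, tsub_self, coeff_monomial, if_pos rfl,
      smul_eq_mul, mul_one, MvPolynomial.coeff_zero] at hc
    exact hb (by
      have := mul_eq_zero.mp hc
      rcases this with h' | h'
      · exact h'
      · exact absurd h' (dfc_self_ne_zero b))
  · intro v hv hvb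
    rw [MvPolynomial.mem_support_iff] at hv
    rw [diffL_monomial, MvPolynomial.coeff_smul, coeff_monomial]
    rw [if_neg, smul_eq_mul, mul_zero]
    intro heq
    have hle : ∀ j, v j ≤ b j := by
      intro j
      have : v - b = 0 := heq
      have := congrFun (congrArg (fun f : Fin n →₀ ℕ => (f : Fin n → ℕ)) this) j
      simp only [Finsupp.coe_tsub, Pi.sub_apply, Finsupp.coe_zero, Pi.zero_apply] at this
      omega
    exact hvb (eq_of_le_of_degF_eq hle (by
      rw [hdb, (isHomog_iff_degF q N).mp hq v hv]))
  · intro hbn; exact absurd hbmem hbn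

end util

section bridge

variable {n d : ℕ}

/-- general degree over a fintype -/
lemma Finsupp.degree_eq_sum_univ {τ : Type*} [Fintype τ] (b : τ →₀ ℕ) :
    Finsupp.degree b = ∑ i, b i :=
  Finset.sum_subset (Finset.subset_univ _) (by
    intro x _ hx
    exact Finsupp.notMem_support_iff.mp hx)

lemma weight_apply_row (b : (Fin d × Fin n) →₀ ℕ) (i : Fin d) :
    Finsupp.weight (fun p : Fin d × Fin n => (Pi.single p.1 1 : Fin d → ℕ)) b i
      = ∑ j, b (i, j) := by
  classical
  rw [Finsupp.weight_apply, Finsupp.sum, Finset.sum_apply]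
  have step : ∀ p : Fin d × Fin n, (b p • (Pi.single p.1 1 : Fin d → ℕ)) i
      = if p.1 = i then b p else 0 := by
    intro p
    rw [Pi.smul_apply, Pi.single_apply, smul_eq_mul]
    by_cases h : i = p.1
    · rw [if_pos h, if_pos h.symm, mul_one]
    · rw [if_neg h, if_neg fun hh => h hh.symm, mul_zero]
  calc ∑ p ∈ b.support, (b p • (Pi.single p.1 1 : Fin d → ℕ)) i
      = ∑ p : Fin d × Fin n, if p.1 = i then b p else 0 := by
        rw [Finset.sum_congr rfl fun p _ => step p]
        refine Finset.sum_subset (Finset.subset_univ _) ?_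
        intro p _ hp
        rw [Finsupp.notMem_support_iff.mp hp]
        simp
    _ = ∑ i' : Fin d, ∑ j : Fin n, if i' = i then b (i', j) else 0 := by
        rw [Fintype.sum_prod_type]
    _ = ∑ i' : Fin d, if i' = i then (∑ j, b (i', j)) else 0 := by
        refine Finset.sum_congr rfl fun i' _ => ?_
        split <;> simp
    _ = ∑ j, b (i, j) := Fintype.sum_ite_eq' i _

lemma mem_Scomp_iff {u : Fin d → ℕ} {φ : MvPolynomial (Fin d × Fin n) ℂ} :
    φ ∈ Scomp n d u ↔ ∀ b ∈ φ.support, ∀ i, (∑ j, b (i, j)) = u i := by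
  rw [Scomp, mem_weightedHomogeneousSubmodule]
  constructor
  · intro h b hb i
    rw [← weight_apply_row b i, h (MvPolynomial.mem_support_iff.mp hb)]
  · intro h b hb
    funext i
    rw [weight_apply_row]
    exact h b (MvPolynomial.mem_support_iff.mpr hb) i

lemma isHomog_of_mem_Scomp {u : Fin d → ℕ} {φ : MvPolynomial (Fin d × Fin n) ℂ}
    (hφ : φ ∈ Scomp n d u) : φ.IsHomogeneous (∑ i, u i) := by
  intro b hb
  change Finsupp.weight (fun _ => 1) b = _
  rw [← Finsupp.degree_eq_weight_one, Finsupp.degree_eq_sum_univ, Fintype.sum_prod_type]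
  exact Finset.sum_congr rfl fun i _ =>
    mem_Scomp_iff.mp hφ b (MvPolynomial.mem_support_iff.mpr hb) i

lemma piAlg_eq_rename : piAlg n d = rename (R := ℂ) Prod.snd := by
  apply MvPolynomial.algHom_ext
  intro p
  rw [piAlg, aeval_X, rename_X]

lemma rho_eq_rename {u : Fin d → ℕ} {ψ : MvPolynomial (Fin d × Fin n) ℂ}
    (hu : ∀ i : Fin d, (i : ℕ) ≠ 0 → u i = 0) (hψ : ψ ∈ Scomp n d u) :
    rho n d ψ = rename Prod.snd ψ := by
  classical
  rw [← piAlg_eq_rename]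
  conv_lhs => rw [← ψ.support_sum_monomial_coeff]
  conv_rhs => rw [← ψ.support_sum_monomial_coeff]
  rw [map_sum, map_sum]
  refine Finset.sum_congr rfl fun b hb => ?_
  rw [rho, piAlg, aeval_monomial, aeval_monomial]
  refine congrArg _ (Finsupp.prod_congr ?_)
  intro p hp
  rw [if_pos]
  by_contra hne
  have h0 := hu p.1 hne
  have hs := mem_Scomp_iff.mp hψ b hb p.1
  rw [h0] at hs
  have hle : b p ≤ ∑ j, b (p.1, j) :=
    Finset.single_le_sum (f := fun j => b (p.1, j)) (fun _ _ => Nat.zero_le _)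
      (Finset.mem_univ p.2)
  rw [hs] at hle
  rw [Finsupp.mem_support_iff] at hp
  omega

end bridge

section key

variable {n d : ℕ}

/-- the multilinear exponent associated to `m : Fin d → Fin n`. -/
def emb (m : Fin d → Fin n) : (Fin d × Fin n) →₀ ℕ := ∑ i, Finsupp.single (i, m i) 1

lemma emb_apply (m : Fin d → Fin n) (p : Fin d × Fin n) :
    emb m p = if m p.1 = p.2 then 1 else 0 := by
  classical
  rw [emb, Finsupp.finset_sum_apply]
  obtain ⟨i', j'⟩ := p
  rw [Finset.sum_eq_single i' (fun i _ hne => ?_) (fun h => absurd (Finset.mem_univ _) h)]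
  · rw [Finsupp.single_apply]
    simp [Prod.ext_iff]
  · rw [Finsupp.single_apply, if_neg]
    intro h
    rw [Prod.ext_iff] at h
    exact hne h.1

lemma emb_injective : Function.Injective (emb (n := n) (d := d)) := by
  intro m m' h
  funext i
  have h1 : emb m (i, m i) = emb m' (i, m i) := by rw [h]
  rw [emb_apply, emb_apply, if_pos rfl] at h1
  by_cases hc : m' i = m i
  · exact hc.symm
  · rw [if_neg hc] at h1
    exact absurd h1 one_ne_zero

lemma exists_emb {b : (Fin d × Fin n) →₀ ℕ} (hrow : ∀ i, (∑ j, b (i, j)) = 1) :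
    ∃ m : Fin d → Fin n, emb m = b := by
  classical
  have hex : ∀ i : Fin d, ∃ j, b (i, j) ≠ 0 := by
    intro i
    by_contra hc
    push_neg at hc
    have : (∑ j, b (i, j)) = 0 := Finset.sum_eq_zero fun j _ => hc j
    rw [hrow i] at this
    exact one_ne_zero this
  refine ⟨fun i => (hex i).choose, ?_⟩
  ext p
  obtain ⟨i, j⟩ := p
  rw [emb_apply]
  have hbm : b (i, (hex i).choose) ≠ 0 := (hex i).choose_spec
  have hsum := hrow i
  by_cases hc : (hex i).choose = j
  · rw [if_pos hc, ← hc]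
    have h1 : b (i, (hex i).choose) ≤ ∑ j', b (i, j') :=
      Finset.single_le_sum (f := fun j' => b (i, j')) (fun _ _ => Nat.zero_le _)
        (Finset.mem_univ _)
    omega
  · rw [if_neg hc]
    have h2 : b (i, j) + b (i, (hex i).choose) ≤ ∑ j', b (i, j') := by
      rw [← Finset.sum_pair (f := fun j' => b (i, j'))
        (show j ≠ (hex i).choose from fun h => hc h.symm)]
      exact Finset.sum_le_sum_of_subset (Finset.subset_univ _)
    omega

lemma multilinear_expand {φ : MvPolynomial (Fin d × Fin n) ℂ}
    (hφ : φ ∈ Scomp n d fun _ => 1) :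
    φ = ∑ m : Fin d → Fin n, φ.coeff (emb m) • monomial (emb m) (1 : ℂ) := by
  classical
  apply MvPolynomial.ext
  intro b
  rw [MvPolynomial.coeff_sum]
  by_cases hb : ∃ m, emb m = b
  · obtain ⟨m0, rfl⟩ := hb
    rw [Finset.sum_eq_single m0 (fun m _ hne => ?_) (fun h => absurd (Finset.mem_univ _) h)]
    · rw [MvPolynomial.coeff_smul, coeff_monomial, if_pos rfl, smul_eq_mul, mul_one]
    · rw [MvPolynomial.coeff_smul, coeff_monomial, if_neg fun h => hne (emb_injective h),
        smul_eq_mul, mul_zero]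
  · have h1 : φ.coeff b = 0 := by
      by_contra h0
      exact hb (exists_emb fun i =>
        mem_Scomp_iff.mp hφ b (MvPolynomial.mem_support_iff.mpr h0) i)
    rw [h1]
    symm
    refine Finset.sum_eq_zero fun m _ => ?_
    rw [MvPolynomial.coeff_smul, coeff_monomial, if_neg fun h => hb ⟨m, h⟩, smul_eq_mul,
      mul_zero]

/-- the column content of `m`. -/
def colm (m : Fin d → Fin n) : Fin n →₀ ℕ := (emb m).mapDomain Prod.snd

lemma colm_eq_sum (m : Fin d → Fin n) : colm m = ∑ i, Finsupp.single (m i) 1 := by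
  rw [colm, emb, Finsupp.mapDomain_finset_sum]
  refine Finset.sum_congr rfl fun i _ => ?_
  rw [Finsupp.mapDomain_single]

lemma colm_apply (m : Fin d → Fin n) (j : Fin n) :
    colm m j = Fintype.card {i // m i = j} := by
  classical
  rw [colm_eq_sum, Finsupp.finset_sum_apply, Fintype.card_subtype, Finset.card_filter]
  refine Finset.sum_congr rfl fun i _ => ?_
  rw [Finsupp.single_apply]

lemma degF_colm (m : Fin d → Fin n) : degF (colm m) = d := by
  classical
  rw [degF]
  calc ∑ j, colm m j = ∑ j : Fin n, ∑ i : Fin d, Finsupp.single (m i) 1 j := by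
        refine Finset.sum_congr rfl fun j _ => ?_
        rw [colm_eq_sum, Finsupp.finset_sum_apply]
    _ = ∑ i : Fin d, ∑ j : Fin n, Finsupp.single (m i) 1 j := Finset.sum_comm
    _ = ∑ _i : Fin d, 1 := by
        refine Finset.sum_congr rfl fun i _ => ?_
        rw [Finset.sum_congr rfl fun j (_ : j ∈ Finset.univ) => Finsupp.single_apply]
        rw [Fintype.sum_ite_eq (m i) fun _ => 1]
    _ = d := by rw [Finset.sum_const, smul_eq_mul, mul_one, Finset.card_univ, Fintype.card_fin]

lemma colm_comp (m : Fin d → Fin n) (τ : Equiv.Perm (Fin d)) : colm (m ∘ τ) = colm m := by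
  rw [colm_eq_sum, colm_eq_sum]
  exact Equiv.sum_comp τ fun i => Finsupp.single (m i) 1

lemma exists_perm_of_colm_eq {m m' : Fin d → Fin n} (h : colm m = colm m') :
    ∃ τ : Equiv.Perm (Fin d), m ∘ τ = m' := by
  classical
  have e : ∀ j, {i // m' i = j} ≃ {i // m i = j} := fun j =>
    Fintype.equivOfCardEq (by rw [← colm_apply, ← colm_apply, h])
  refine ⟨((Equiv.sigmaFiberEquiv m').symm.trans
    (Equiv.sigmaCongrRight e)).trans (Equiv.sigmaFiberEquiv m), ?_⟩
  funext i
  exact ((e (m' i)) ⟨i, rfl⟩).prop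

/-- number of permutation intertwiners between `m` and `m'`. -/
def KK (m m' : Fin d → Fin n) : ℕ := Fintype.card {τ : Equiv.Perm (Fin d) // m ∘ τ = m'}

lemma KK_eq {m m' : Fin d → Fin n} (h : colm m = colm m') :
    KK m m' = ∏ j, (colm m j).factorial := by
  classical
  obtain ⟨τ₀, hτ₀⟩ := exists_perm_of_colm_eq h
  have e2 : {σ' : Equiv.Perm (Fin d) // m' ∘ σ' = m'} ≃
      {τ : Equiv.Perm (Fin d) // m ∘ τ = m'} := {
    toFun := fun σ' => ⟨σ'.1.trans τ₀, by
      funext i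
      have h1 : m (τ₀ (σ'.1 i)) = m' (σ'.1 i) := congrFun hτ₀ (σ'.1 i)
      have h2 : m' (σ'.1 i) = m' i := congrFun σ'.2 i
      show m (τ₀ (σ'.1 i)) = m' i
      rw [h1, h2]⟩
    invFun := fun τ => ⟨τ.1.trans τ₀.symm, by
      funext i
      show m' (τ₀.symm (τ.1 i)) = m' i
      have h1 : m (τ₀ (τ₀.symm (τ.1 i))) = m' (τ₀.symm (τ.1 i)) := congrFun hτ₀ _
      rw [Equiv.apply_symm_apply] at h1
      rw [← h1]
      exact congrFun τ.2 i⟩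
    left_inv := fun σ' => by
      apply Subtype.ext
      apply Equiv.ext
      intro i
      simp
    right_inv := fun τ => by
      apply Subtype.ext
      apply Equiv.ext
      intro i
      simp }
  rw [KK, ← Fintype.card_congr e2, DomMulAct.stabilizer_card m']
  refine Finset.prod_congr rfl fun j _ => ?_
  rw [show Fintype.card {a // m' a = j} = colm m' j from (colm_apply m' j).symm, h]

lemma KK_zero {m m' : Fin d → Fin n} (h : colm m ≠ colm m') : KK m m' = 0 := by
  rw [KK, Fintype.card_eq_zero_iff]
  exact ⟨fun τ => h (by rw [← τ.2, colm_comp])⟩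

lemma diffL_colm (m m' : Fin d → Fin n) :
    diffL (colm m') (monomial (colm m) (1 : ℂ)) = ((KK m m' : ℕ) : ℂ) • 1 := by
  classical
  by_cases h : colm m = colm m'
  · have hd : dfc (colm m') (colm m) = ∏ j : Fin n, ((colm m j).factorial : ℂ) := by
      rw [← h, dfc_self]
      refine Finset.prod_subset (Finset.subset_univ _) ?_
      intro x _ hx
      rw [Finsupp.notMem_support_iff.mp hx]
      simp
    rw [diffL_monomial, one_mul, hd, ← h, tsub_self, monomial_zero', C_1, KK_eq h,
      Nat.cast_prod]
  · rw [diffL_monomial, one_mul, dfc_eq_zero, zero_smul, KK_zero h, Nat.cast_zero, zero_smul]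
    by_contra hc
    push_neg at hc
    exact h (eq_of_le_of_degF_eq hc (by rw [degF_colm, degF_colm])).symm

lemma diffL_emb (m m' : Fin d → Fin n) :
    diffL (emb m') (monomial (emb m) (1 : ℂ)) =
      if m = m' then (1 : MvPolynomial (Fin d × Fin n) ℂ) else 0 := by
  classical
  by_cases h : m = m'
  · subst h
    have hd : dfc (emb m) (emb m) = 1 := by
      rw [dfc_self]
      refine Finset.prod_eq_one fun p hp => ?_
      rw [emb_apply]
      by_cases hc : m p.1 = p.2
      · rw [if_pos hc]
        norm_num
      · rw [Finsupp.mem_support_iff, emb_apply, if_neg hc] at hp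
        exact absurd rfl hp
    rw [if_pos rfl, diffL_monomial, one_mul, hd, tsub_self, monomial_zero', C_1, one_smul]
  · rw [if_neg h, diffL_monomial, one_mul, dfc_eq_zero, zero_smul]
    obtain ⟨i, hi⟩ := Function.ne_iff.mp h
    refine ⟨(i, m' i), ?_⟩
    rw [emb_apply, emb_apply]
    simp [hi]

lemma coeff_emb_comp {F : MvPolynomial (Fin d × Fin n) ℂ} (hsym : IsSymm n d F)
    (m : Fin d → Fin n) (τ : Equiv.Perm (Fin d)) :
    F.coeff (emb (m ∘ τ)) = F.coeff (emb m) := by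
  classical
  have hinj : Function.Injective (Prod.map (τ.symm : Fin d → Fin d) (id : Fin n → Fin n)) := by
    intro p q hpq
    rw [Prod.ext_iff] at hpq ⊢
    exact ⟨τ.symm.injective hpq.1, hpq.2⟩
  have hmap : (emb m).mapDomain (Prod.map (τ.symm : Fin d → Fin d) id) = emb (m ∘ τ) := by
    rw [emb, emb, Finsupp.mapDomain_finset_sum]
    refine Fintype.sum_equiv τ.symm _ _ fun i => ?_
    rw [Finsupp.mapDomain_single]
    show Finsupp.single (τ.symm i, m i) 1 = Finsupp.single (τ.symm i, m (τ (τ.symm i))) 1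
    rw [Equiv.apply_symm_apply]
  have hco := MvPolynomial.coeff_rename_mapDomain
    (Prod.map (τ.symm : Fin d → Fin d) id) hinj F (emb m)
  rw [hsym τ.symm, hmap] at hco
  exact hco

lemma key_symmetric {F ψ : MvPolynomial (Fin d × Fin n) ℂ}
    (hF : F ∈ Scomp n d fun _ => 1) (hsym : IsSymm n d F)
    (hψ : ψ ∈ Scomp n d fun _ => 1) (hann : apolar F ψ = 0) :
    apolar (rename Prod.snd F) (rename Prod.snd ψ) = 0 := by
  classical
  have hFe := multilinear_expand hF
  have hψe := multilinear_expand hψ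
  -- step 1 : the scalar identity
  have hsc : (∑ m : Fin d → Fin n, ψ.coeff (emb m) * F.coeff (emb m)) = 0 := by
    have h1 : apolar F ψ =
        (∑ m : Fin d → Fin n, ψ.coeff (emb m) * F.coeff (emb m)) • 1 := by
      calc apolar F ψ = ∑ m' : Fin d → Fin n, ψ.coeff (emb m') • diffL (emb m') F := by
            conv_lhs => rw [hψe]
            rw [map_sum]
            refine Finset.sum_congr rfl fun m' _ => ?_
            rw [map_smul, apolar_monomial, one_smul]
        _ = ∑ m' : Fin d → Fin n, ψ.coeff (emb m') •
              (∑ m : Fin d → Fin n, F.coeff (emb m) •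
                diffL (emb m') (monomial (emb m) (1 : ℂ))) := by
            refine Finset.sum_congr rfl fun m' _ => ?_
            congr 1
            conv_lhs => rw [hFe]
            rw [map_sum]
            refine Finset.sum_congr rfl fun m _ => ?_
            rw [map_smul]
        _ = ∑ m' : Fin d → Fin n, ψ.coeff (emb m') •
              (F.coeff (emb m') • (1 : MvPolynomial (Fin d × Fin n) ℂ)) := by
            refine Finset.sum_congr rfl fun m' _ => ?_
            congr 1
            calc ∑ m : Fin d → Fin n, F.coeff (emb m) •
                  diffL (emb m') (monomial (emb m) (1 : ℂ))
                = ∑ m : Fin d → Fin n, if m = m' then F.coeff (emb m) •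
                    (1 : MvPolynomial (Fin d × Fin n) ℂ) else 0 := by
                  refine Finset.sum_congr rfl fun m _ => ?_
                  rw [diffL_emb m m', smul_ite_zero]
              _ = F.coeff (emb m') • 1 := Fintype.sum_ite_eq' m' _
        _ = (∑ m : Fin d → Fin n, ψ.coeff (emb m) * F.coeff (emb m)) • 1 := by
            rw [Finset.sum_smul]
            refine Finset.sum_congr rfl fun m _ => ?_
            rw [smul_smul]
    rw [hann] at h1
    have h2 := congrArg (MvPolynomial.coeff 0) h1.symm
    rwa [MvPolynomial.coeff_smul, coeff_zero_one, smul_eq_mul, mul_one,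
      MvPolynomial.coeff_zero] at h2
  -- step 2 : the final computation
  have hmain : apolar (rename Prod.snd F) (rename Prod.snd ψ) =
      (∑ m' : Fin d → Fin n, ∑ m : Fin d → Fin n,
        ψ.coeff (emb m') * F.coeff (emb m) * ((KK m m' : ℕ) : ℂ)) • 1 := by
    have hP : rename Prod.snd F =
        ∑ m : Fin d → Fin n, F.coeff (emb m) • monomial (colm m) (1 : ℂ) := by
      conv_lhs => rw [hFe]
      rw [map_sum]
      refine Finset.sum_congr rfl fun m _ => ?_
      rw [map_smul, rename_monomial]
      rfl
    have hQ : rename Prod.snd ψ =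
        ∑ m : Fin d → Fin n, ψ.coeff (emb m) • monomial (colm m) (1 : ℂ) := by
      conv_lhs => rw [hψe]
      rw [map_sum]
      refine Finset.sum_congr rfl fun m _ => ?_
      rw [map_smul, rename_monomial]
      rfl
    calc apolar (rename Prod.snd F) (rename Prod.snd ψ)
        = ∑ m' : Fin d → Fin n, ψ.coeff (emb m') •
            diffL (colm m') (rename Prod.snd F) := by
          conv_lhs => rw [hQ]
          rw [map_sum]
          refine Finset.sum_congr rfl fun m' _ => ?_
          rw [map_smul, apolar_monomial, one_smul]
      _ = ∑ m' : Fin d → Fin n, ψ.coeff (emb m') •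
            (∑ m : Fin d → Fin n, F.coeff (emb m) •
              diffL (colm m') (monomial (colm m) (1 : ℂ))) := by
          refine Finset.sum_congr rfl fun m' _ => ?_
          congr 1
          conv_lhs => rw [hP]
          rw [map_sum]
          refine Finset.sum_congr rfl fun m _ => ?_
          rw [map_smul]
      _ = ∑ m' : Fin d → Fin n, ∑ m : Fin d → Fin n,
            (ψ.coeff (emb m') * F.coeff (emb m) * ((KK m m' : ℕ) : ℂ)) • 1 := by
          refine Finset.sum_congr rfl fun m' _ => ?_
          rw [Finset.smul_sum]
          refine Finset.sum_congr rfl fun m _ => ?_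
          rw [diffL_colm, smul_smul, smul_smul, mul_assoc]
      _ = (∑ m' : Fin d → Fin n, ∑ m : Fin d → Fin n,
            ψ.coeff (emb m') * F.coeff (emb m) * ((KK m m' : ℕ) : ℂ)) • 1 := by
          rw [Finset.sum_smul]
          refine Finset.sum_congr rfl fun m' _ => ?_
          rw [Finset.sum_smul]
  have hKc : ∀ m m' : Fin d → Fin n, ((KK m m' : ℕ) : ℂ) =
      ∑ τ : Equiv.Perm (Fin d), if m ∘ τ = m' then 1 else 0 := by
    intro m m'
    rw [KK, Fintype.card_subtype, Finset.card_filter]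
    push_cast
    rfl
  have hscal : (∑ m' : Fin d → Fin n, ∑ m : Fin d → Fin n,
      ψ.coeff (emb m') * F.coeff (emb m) * ((KK m m' : ℕ) : ℂ)) = 0 := by
    calc ∑ m' : Fin d → Fin n, ∑ m : Fin d → Fin n,
          ψ.coeff (emb m') * F.coeff (emb m) * ((KK m m' : ℕ) : ℂ)
        = ∑ m' : Fin d → Fin n, ∑ m : Fin d → Fin n, ∑ τ : Equiv.Perm (Fin d),
            if m ∘ τ = m' then ψ.coeff (emb m') * F.coeff (emb m) else 0 := by
          refine Finset.sum_congr rfl fun m' _ => Finset.sum_congr rfl fun m _ => ?_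
          rw [hKc, Finset.mul_sum]
          refine Finset.sum_congr rfl fun τ _ => ?_
          rw [mul_ite, mul_one, mul_zero]
      _ = ∑ m : Fin d → Fin n, ∑ τ : Equiv.Perm (Fin d), ∑ m' : Fin d → Fin n,
            if m ∘ τ = m' then ψ.coeff (emb m') * F.coeff (emb m) else 0 := by
          rw [Finset.sum_comm]
          exact Finset.sum_congr rfl fun m _ => Finset.sum_comm
      _ = ∑ m : Fin d → Fin n, ∑ τ : Equiv.Perm (Fin d),
            ψ.coeff (emb (m ∘ τ)) * F.coeff (emb m) := by
          refine Finset.sum_congr rfl fun m _ => Finset.sum_congr rfl fun τ _ => ?_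
          exact Fintype.sum_ite_eq (m ∘ τ) _
      _ = ∑ τ : Equiv.Perm (Fin d), ∑ m : Fin d → Fin n,
            ψ.coeff (emb (m ∘ τ)) * F.coeff (emb (m ∘ τ)) := by
          rw [Finset.sum_comm]
          refine Finset.sum_congr rfl fun τ _ => Finset.sum_congr rfl fun m _ => ?_
          rw [coeff_emb_comp hsym m τ]
      _ = ∑ τ : Equiv.Perm (Fin d), ∑ m : Fin d → Fin n,
            ψ.coeff (emb m) * F.coeff (emb m) := by
          refine Finset.sum_congr rfl fun τ _ => ?_
          exact Fintype.sum_equiv (Equiv.arrowCongr τ.symm (Equiv.refl (Fin n))) _ _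
            fun m => rfl
      _ = 0 := by
          rw [Finset.sum_congr rfl fun τ (_ : τ ∈ Finset.univ) => hsc]
          rw [Finset.sum_const_zero]
  rw [hmain, hscal, zero_smul]

end key

section final

variable {n d : ℕ}

lemma pF_eq (F : MvPolynomial (Fin d × Fin n) ℂ) : pF n d F = rename Prod.snd F := rfl

lemma piL_apply (x : MvPolynomial (Fin d × Fin n) ℂ) :
    piL n d x = rename Prod.snd x := by
  show piAlg n d x = _
  rw [piAlg_eq_rename]

/-- the apolar ideal, as an ideal. -/
def annI {n : ℕ} (p : MvPolynomial (Fin n) ℂ) : Ideal (MvPolynomial (Fin n) ℂ) where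
  carrier := {ψ | apolar p ψ = 0}
  add_mem' := fun {a b} ha hb => by
    have ha' : apolar p a = 0 := ha
    have hb' : apolar p b = 0 := hb
    show apolar p (a + b) = 0
    rw [map_add, ha', hb', add_zero]
  zero_mem' := by
    show apolar p 0 = 0
    exact map_zero _
  smul_mem' := fun c x hx => by
    have hx' : apolar p x = 0 := hx
    show apolar p (c • x) = 0
    rw [smul_eq_mul, apolar_mul, hx', apolar_zero_left]

end final

/-- from the proof of Theorem 5.4: if `F` is a concise symmetric
tensor and `J ⊆ Ann(F)` is a homogeneous ideal with
`π(J_{(d,0,…,0)}) ⊆ π(J_𝟏)`, then `ρ(J) ⊆ Ann(p_F)`. -/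
theorem stmt_11 (n d : ℕ) (hn : 0 < n) (hd : 0 < d)
    (F : MvPolynomial (Fin d × Fin n) ℂ)
    (hF : F ∈ Scomp n d fun _ => 1) (hsym : IsSymm n d F) (hconc : Concise n d F)
    (J : Ideal (MvPolynomial (Fin d × Fin n) ℂ)) (hhom : IsHomogS n d J)
    (hJ : Submodule.restrictScalars ℂ J ≤ ann F)
    (hpi : Submodule.map (piL n d)
        (Submodule.restrictScalars ℂ J ⊓ Scomp n d fun i => if (i : ℕ) = 0 then d else 0) ≤
      Submodule.map (piL n d) (Submodule.restrictScalars ℂ J ⊓ Scomp n d fun _ => 1)) :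
    Submodule.restrictScalars ℂ (Ideal.map (rho n d) J) ≤ ann (pF n d F) := by
  classical
  intro x hx
  rw [Submodule.restrictScalars_mem] at hx
  show x ∈ ann (pF n d F)
  rw [ann, LinearMap.mem_ker]
  suffices hsuff : Ideal.map (rho n d) J ≤ annI (pF n d F) from hsuff hx
  rw [Ideal.map_le_iff_le_comap]
  intro ψ hψ
  show apolar (pF n d F) (rho n d ψ) = 0
  have hψ2 : ψ ∈ ⨆ u : Fin d → ℕ, (Submodule.restrictScalars ℂ J ⊓ Scomp n d u) := by
    rw [← hhom]
    exact (Submodule.restrictScalars_mem ℂ J ψ).mpr hψ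
  refine Submodule.iSup_induction (motive := fun y => apolar (pF n d F) (rho n d y) = 0) _ hψ2
    (fun u ψ0 hmem => ?_)
    (by show apolar (pF n d F) (rho n d (0 : MvPolynomial (Fin d × Fin n) ℂ)) = 0
        rw [map_zero, map_zero])
    (fun y z hy hz => by
      show apolar (pF n d F) (rho n d (y + z)) = 0
      have hy' : apolar (pF n d F) (rho n d y) = 0 := hy
      have hz' : apolar (pF n d F) (rho n d z) = 0 := hz
      rw [map_add, map_add, hy', hz', add_zero])
  obtain ⟨hJ0, hS0⟩ := hmem
  show apolar (pF n d F) (rho n d ψ0) = 0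
  replace hJ0 : ψ0 ∈ J := hJ0
  by_cases hrowz : ∀ i : Fin d, (i : ℕ) ≠ 0 → u i = 0
  · -- `ψ0` only involves the variables in row `0`
    rw [rho_eq_rename hrowz hS0]
    set i0 : Fin d := ⟨0, hd⟩ with hi0
    set a := ∑ i, u i with ha
    have hpFh : (pF n d F).IsHomogeneous d := by
      rw [pF_eq]
      have h1 := (isHomog_of_mem_Scomp hF).rename_isHomogeneous (f := Prod.snd)
      have h2 : (∑ _i : Fin d, (1 : ℕ)) = d := by simp
      rwa [h2] at h1
    have hψh : (rename Prod.snd ψ0).IsHomogeneous a :=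
      (isHomog_of_mem_Scomp hS0).rename_isHomogeneous
    by_cases hda : d < a
    · exact apolar_eq_zero_of_lt hpFh hψh hda
    · push_neg at hda
      have hai0 : a = u i0 := by
        rw [ha]
        refine Finset.sum_eq_single i0 (fun i _ hne => hrowz i fun h => hne (Fin.ext h))
          (fun h => absurd (Finset.mem_univ _) h)
      refine eq_zero_of_apolar_all (N := d - a)
        ((mem_homogeneousSubmodule _ _).mp (apolar_isHomog hpFh hψh)) ?_
      intro γ hγ
      rw [← apolar_mul]
      -- the row-0 monomial with column content `γ`
      set Γ : (Fin d × Fin n) →₀ ℕ := γ.mapDomain (fun j => (i0, j)) with hΓ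
      have hginj : Function.Injective (fun j : Fin n => (i0, j)) := by
        intro p q hpq
        rw [Prod.ext_iff] at hpq
        exact hpq.2
      have hΓapp : ∀ (i : Fin d) (j : Fin n), Γ (i, j) = if i = i0 then γ j else 0 := by
        intro i j
        by_cases h : i = i0
        · subst h
          rw [hΓ, Finsupp.mapDomain_apply hginj, if_pos rfl]
        · rw [hΓ, Finsupp.mapDomain_notin_range, if_neg h]
          rintro ⟨j', hj'⟩
          rw [Prod.ext_iff] at hj'
          exact h hj'.1.symm
      have hmulmem : monomial Γ (1 : ℂ) * ψ0 ∈
          Scomp n d (fun i => if (i : ℕ) = 0 then d else 0) := by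
        rw [Scomp, mem_weightedHomogeneousSubmodule]
        have h1 : IsWeightedHomogeneous
            (fun p : Fin d × Fin n => (Pi.single p.1 1 : Fin d → ℕ))
            (monomial Γ (1 : ℂ)) (fun i => if (i : ℕ) = 0 then d - a else 0) := by
          refine isWeightedHomogeneous_monomial _ _ _ ?_
          funext i
          rw [weight_apply_row Γ i]
          by_cases h : (i : ℕ) = 0
          · have hii : i = i0 := Fin.ext h
            subst hii
            rw [if_pos h]
            calc (∑ j, Γ (i0, j)) = ∑ j, γ j := by
                  refine Finset.sum_congr rfl fun j _ => ?_
                  rw [hΓapp, if_pos rfl]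
              _ = d - a := hγ
          · rw [if_neg h]
            refine Finset.sum_eq_zero fun j _ => ?_
            rw [hΓapp, if_neg fun hii => h (by rw [hii])]
        have h2 : IsWeightedHomogeneous
            (fun p : Fin d × Fin n => (Pi.single p.1 1 : Fin d → ℕ)) ψ0 u := hS0
        have h3 := h1.mul h2
        have h4 : ((fun i : Fin d => if (i : ℕ) = 0 then d - a else 0) + u)
            = fun i : Fin d => if (i : ℕ) = 0 then d else 0 := by
          funext i
          rw [Pi.add_apply]
          by_cases h : (i : ℕ) = 0
          · have hii : i = i0 := Fin.ext h
            subst hii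
            rw [if_pos h, if_pos h, ← hai0]
            omega
          · rw [if_neg h, if_neg h, zero_add]
            exact hrowz i h
        rwa [h4] at h3
      have hJmul : monomial Γ (1 : ℂ) * ψ0 ∈ J := Ideal.mul_mem_left _ _ hJ0
      have hmap : piL n d (monomial Γ (1 : ℂ) * ψ0) ∈ Submodule.map (piL n d)
          (Submodule.restrictScalars ℂ J ⊓ Scomp n d fun i => if (i : ℕ) = 0 then d else 0) :=
        ⟨_, ⟨(Submodule.restrictScalars_mem ℂ J _).mpr hJmul, hmulmem⟩, rfl⟩
      obtain ⟨ψ', hψ'mem, hψ'eq⟩ := hpi hmap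
      obtain ⟨hψ'J, hψ'S⟩ := hψ'mem
      have hannψ' : apolar F ψ' = 0 := by
        have hker := hJ hψ'J
        rwa [ann, LinearMap.mem_ker] at hker
      have hkey := key_symmetric hF hsym hψ'S hannψ'
      have hprod : monomial γ (1 : ℂ) * rename Prod.snd ψ0 = rename Prod.snd ψ' := by
        have h1 : rename Prod.snd (monomial Γ (1 : ℂ) * ψ0)
            = monomial γ (1 : ℂ) * rename Prod.snd ψ0 := by
          rw [map_mul, rename_monomial]
          have h2 : Γ.mapDomain Prod.snd = γ := by
            rw [hΓ, ← Finsupp.mapDomain_comp]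
            have h3 : (Prod.snd ∘ fun j : Fin n => (i0, j)) = id := rfl
            rw [h3, Finsupp.mapDomain_id]
          rw [h2]
        rw [← h1, ← piL_apply, ← hψ'eq, piL_apply]
      rw [pF_eq, hprod]
      exact hkey
  · -- some entry of `u` off row 0 is positive, so `rho ψ0 = 0`
    push_neg at hrowz
    obtain ⟨i1, hi1ne, hi1u⟩ := hrowz
    have hz : rho n d ψ0 = 0 := by
      conv_lhs => rw [← ψ0.support_sum_monomial_coeff]
      rw [map_sum]
      refine Finset.sum_eq_zero fun b hb => ?_
      rw [rho, aeval_monomial]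
      have hs := mem_Scomp_iff.mp hS0 b hb i1
      have hex : ∃ j, b (i1, j) ≠ 0 := by
        by_contra hc
        push_neg at hc
        rw [Finset.sum_eq_zero fun j _ => hc j] at hs
        exact hi1u hs.symm
      obtain ⟨j, hj⟩ := hex
      have hmemb : (i1, j) ∈ b.support := Finsupp.mem_support_iff.mpr hj
      have hfac : (if (((i1, j).1 : Fin d) : ℕ) = 0 then X (i1, j).2 else
          (0 : MvPolynomial (Fin n) ℂ)) ^ b (i1, j) = 0 := by
        rw [if_neg hi1ne, zero_pow hj]
      rw [Finsupp.prod, Finset.prod_eq_zero hmemb hfac, mul_zero]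
    rw [hz, map_zero]


end BorderComon
end
end
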